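/- arXiv:1104.2706 — 6 statements merged into one kernel-verified Lean document; each statement's English description precedes it below -/
import Mathlib

section
/- Let Π be a subspace partition of V(n,q) containing at least one member of dimension d and at least one of dimension d', with 1 ≤ d, d' ≤ n-2, d ≠ d', and d + d' ≤ n - 1. Then Σ_H b_d(H)·b_{d'}(H) = m_d · m_{d'} · θ_{n-d-d'}, where the sum is over all hyperplanes H of V. -/
open Module

/-- θ_j = (q^j - 1)/(q - 1). -/
def theta (q j : ℕ) : ℕ := (q ^ j - 1) / (q - 1)

/-- A subspace partition: a collection of nonzero subspaces such that every
nonzero vector lies in exactly one member. -/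
def IsSubspacePartition {F V : Type*} [Field F] [AddCommGroup V] [Module F V]
    (P : Finset (Submodule F V)) : Prop :=
  (∀ W ∈ P, W ≠ ⊥) ∧ ∀ v : V, v ≠ 0 → ∃! W, W ∈ P ∧ v ∈ W

section Aux

open Finset

variable {F : Type*} [Field F] [Fintype F]
variable {V : Type*} [AddCommGroup V] [Module F V] [Fintype V]

open scoped Classical in
/-- nonzero vectors of a submodule -/
lemma aux_card_nonzero (W : Submodule F V) :
    (univ.filter (fun v : V => v ∈ W ∧ v ≠ 0)).card
      = Fintype.card F ^ finrank F ↥W - 1 := by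
  have h1 : (univ.filter (fun v : V => v ∈ W ∧ v ≠ 0))
      = (univ.filter (fun v : V => v ∈ W)).erase 0 := by
    ext v
    simp [Finset.mem_erase, and_comm]
  have h0 : (0 : V) ∈ univ.filter (fun v : V => v ∈ W) := by simp
  rw [h1, Finset.card_erase_of_mem h0]
  congr 1
  rw [← Fintype.card_subtype]
  rw [show Fintype.card {v : V // v ∈ W} = Fintype.card ↥W from rfl]
  exact card_eq_pow_finrank (K := F)

open scoped Classical in
/-- number of lines inside a submodule, times (q-1). -/
lemma aux_card_lines_mul (A : Submodule F V) :
    (univ.filter (fun L : Submodule F V => finrank F ↥L = 1 ∧ L ≤ A)).card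
        * (Fintype.card F - 1)
      = Fintype.card F ^ finrank F ↥A - 1 := by
  have key : (univ.filter (fun v : V => v ∈ A ∧ v ≠ 0)).card
      = ∑ L ∈ univ.filter (fun L : Submodule F V => finrank F ↥L = 1 ∧ L ≤ A),
          ((univ.filter (fun v : V => v ∈ A ∧ v ≠ 0)).filter
            (fun v => Submodule.span F {v} = L)).card := by
    apply Finset.card_eq_sum_card_fiberwise
    intro v hv
    simp only [Finset.mem_coe, Finset.mem_filter, Finset.mem_univ, true_and] at hv ⊢
    exact ⟨finrank_span_singleton hv.2, (Submodule.span_singleton_le_iff_mem v A).2 hv.1⟩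
  have fib : ∀ L ∈ univ.filter (fun L : Submodule F V => finrank F ↥L = 1 ∧ L ≤ A),
      ((univ.filter (fun v : V => v ∈ A ∧ v ≠ 0)).filter
        (fun v => Submodule.span F {v} = L)).card = Fintype.card F - 1 := by
    intro L hL
    simp only [Finset.mem_filter, Finset.mem_univ, true_and] at hL
    have : ((univ.filter (fun v : V => v ∈ A ∧ v ≠ 0)).filter
        (fun v => Submodule.span F {v} = L))
        = univ.filter (fun v : V => v ∈ L ∧ v ≠ 0) := by
      ext v
      simp only [Finset.mem_filter, Finset.mem_univ, true_and]
      constructor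
      · rintro ⟨⟨_, hv0⟩, hsp⟩
        exact ⟨hsp ▸ Submodule.mem_span_singleton_self v, hv0⟩
      · rintro ⟨hvL, hv0⟩
        have hle : Submodule.span F {v} ≤ L :=
          (Submodule.span_singleton_le_iff_mem v L).2 hvL
        have heq : Submodule.span F {v} = L :=
          Submodule.eq_of_le_of_finrank_eq hle
            (by rw [finrank_span_singleton hv0, hL.1])
        exact ⟨⟨hL.2 hvL, hv0⟩, heq⟩
    rw [this, aux_card_nonzero, hL.1, pow_one]
  rw [Finset.sum_congr rfl fib, Finset.sum_const, smul_eq_mul] at key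
  rw [← key, aux_card_nonzero]

end Aux

section Hyp

open Finset

variable {F : Type*} [Field F] [Fintype F]

set_option maxSynthPendingDepth 2

open scoped Classical in
noncomputable instance dualFintype (n : ℕ) : Fintype (Dual F (Fin n → F)) :=
  Fintype.ofInjective (fun f : Dual F (Fin n → F) => (f : (Fin n → F) → F))
    DFunLike.coe_injective

open scoped Classical in
/-- hyperplanes containing U correspond to lines in the dual annihilator. -/
lemma aux_card_hyperplanes (n : ℕ) (hn : 1 ≤ n) (U : Submodule F (Fin n → F)) :
    (univ.filter (fun H : Submodule F (Fin n → F) => finrank F ↥H = n - 1 ∧ U ≤ H)).card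
      = (univ.filter (fun L : Submodule F (Dual F (Fin n → F)) =>
          finrank F ↥L = 1 ∧ L ≤ U.dualAnnihilator)).card := by
  have hfr : finrank F (Fin n → F) = n := finrank_fin_fun F
  have hann : ∀ H : Submodule F (Fin n → F),
      finrank F ↥H.dualAnnihilator + finrank F ↥H = n := by
    intro H
    have := (Subspace.quotEquivAnnihilator H).finrank_eq
    have h2 := Submodule.finrank_quotient_add_finrank H
    rw [hfr] at h2
    omega
  apply Finset.card_nbij (fun H => H.dualAnnihilator)
  · intro H hH
    simp only [Finset.mem_coe, Finset.mem_filter, Finset.mem_univ, true_and] at hH ⊢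
    refine ⟨?_, ?_⟩
    · have := hann H
      omega
    · exact Submodule.dualAnnihilator_anti hH.2
  · intro H₁ _ H₂ _ h
    exact Subspace.dualAnnihilator_inj.mp h
  · intro L hL
    simp only [Finset.mem_coe, Finset.mem_filter, Finset.mem_univ, true_and] at hL
    refine ⟨L.dualCoannihilator, ?_, ?_⟩
    · have hLA : L.dualCoannihilator.dualAnnihilator = L :=
        Subspace.dualCoannihilator_dualAnnihilator_eq
      simp only [Finset.mem_coe, Finset.mem_filter, Finset.mem_univ, true_and]
      constructor
      · have := hann L.dualCoannihilator
        rw [hLA, hL.1] at this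
        omega
      · calc U = U.dualAnnihilator.dualCoannihilator :=
              Subspace.dualAnnihilator_dualCoannihilator_eq.symm
          _ ≤ L.dualCoannihilator := by
              intro v hv
              rw [Submodule.mem_dualCoannihilator] at hv ⊢
              exact fun φ hφ => hv φ (hL.2 hφ)
    · exact Subspace.dualCoannihilator_dualAnnihilator_eq

open scoped Classical in
lemma aux_card_hyperplanes_eq_theta (q n k : ℕ) (hq : Fintype.card F = q)
    (hn : 1 ≤ n) (U : Submodule F (Fin n → F)) (hU : finrank F ↥U = k) :
    (univ.filter (fun H : Submodule F (Fin n → F) => finrank F ↥H = n - 1 ∧ U ≤ H)).card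
      = theta q (n - k) := by
  have hq2 : 2 ≤ q := hq ▸ Fintype.one_lt_card
  have hfr : finrank F (Fin n → F) = n := finrank_fin_fun F
  have hannU : finrank F ↥U.dualAnnihilator = n - k := by
    have := (Subspace.quotEquivAnnihilator U).finrank_eq
    have h2 := Submodule.finrank_quotient_add_finrank U
    rw [hfr, hU] at h2
    omega
  have key := aux_card_lines_mul (F := F) U.dualAnnihilator
  rw [hannU, hq] at key
  rw [aux_card_hyperplanes n hn U, theta]
  exact (Nat.div_eq_of_eq_mul_left (by omega) key.symm).symm

end Hyp

open scoped Classical in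
theorem sum_over_hyperplanes_bd_bd' {F : Type*} [Field F] [Fintype F]
    (q n d d' : ℕ) (hq : Fintype.card F = q)
    (P : Finset (Submodule F (Fin n → F))) (hP : IsSubspacePartition P)
    (hd1 : 1 ≤ d) (hd2 : d ≤ n - 2) (hd'1 : 1 ≤ d') (hd'2 : d' ≤ n - 2)
    (hne : d ≠ d') (hsum : d + d' ≤ n - 1)
    (hmd : ∃ W ∈ P, finrank F ↥W = d) (hmd' : ∃ W ∈ P, finrank F ↥W = d') :
    ∑ H ∈ (Finset.univ.filter
        (fun (H : Submodule F (Fin n → F)) => finrank F ↥H = n - 1)),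
      (P.filter (fun (W : Submodule F (Fin n → F)) => finrank F ↥W = d ∧ W ≤ H)).card *
      (P.filter (fun (W : Submodule F (Fin n → F)) => finrank F ↥W = d' ∧ W ≤ H)).card
      = (P.filter (fun (W : Submodule F (Fin n → F)) => finrank F ↥W = d)).card
          * (P.filter (fun (W : Submodule F (Fin n → F)) => finrank F ↥W = d')).card
          * theta q (n - d - d') := by
  classical
  have hn3 : 3 ≤ n := by omega
  set Pd := P.filter (fun W : Submodule F (Fin n → F) => finrank F ↥W = d) with hPd
  set Pd' := P.filter (fun W : Submodule F (Fin n → F) => finrank F ↥W = d') with hPd'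
  -- rewrite each b as a filtered card of Pd
  have hb : ∀ H : Submodule F (Fin n → F),
      P.filter (fun W : Submodule F (Fin n → F) => finrank F ↥W = d ∧ W ≤ H) = Pd.filter (fun W => W ≤ H) := by
    intro H
    rw [hPd, Finset.filter_filter]
  have hb' : ∀ H : Submodule F (Fin n → F),
      P.filter (fun W : Submodule F (Fin n → F) => finrank F ↥W = d' ∧ W ≤ H) = Pd'.filter (fun W => W ≤ H) := by
    intro H
    rw [hPd', Finset.filter_filter]
  calc
    ∑ H ∈ (Finset.univ.filter
        (fun (H : Submodule F (Fin n → F)) => finrank F ↥H = n - 1)),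
      (P.filter (fun W : Submodule F (Fin n → F) => finrank F ↥W = d ∧ W ≤ H)).card *
      (P.filter (fun W : Submodule F (Fin n → F) => finrank F ↥W = d' ∧ W ≤ H)).card
      = ∑ H ∈ (Finset.univ.filter
        (fun (H : Submodule F (Fin n → F)) => finrank F ↥H = n - 1)),
          ∑ W ∈ Pd, ∑ W' ∈ Pd',
            (if W ≤ H then 1 else 0) * (if W' ≤ H then 1 else 0) := by
        refine Finset.sum_congr rfl fun H _ => ?_
        rw [hb H, hb' H, Finset.card_filter, Finset.card_filter, Finset.sum_mul_sum]
    _ = ∑ W ∈ Pd, ∑ W' ∈ Pd', ∑ H ∈ (Finset.univ.filter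
        (fun (H : Submodule F (Fin n → F)) => finrank F ↥H = n - 1)),
            (if W ≤ H then 1 else 0) * (if W' ≤ H then 1 else 0) := by
        rw [Finset.sum_comm]
        exact Finset.sum_congr rfl fun W _ => Finset.sum_comm
    _ = ∑ W ∈ Pd, ∑ W' ∈ Pd', theta q (n - d - d') := by
        refine Finset.sum_congr rfl fun W hW => Finset.sum_congr rfl fun W' hW' => ?_
        rw [hPd, Finset.mem_filter] at hW
        rw [hPd', Finset.mem_filter] at hW'
        have hWne : W ≠ W' := fun h => hne (by rw [← hW.2, h, hW'.2])
        have hdisj : W ⊓ W' = ⊥ := by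
          rw [Submodule.eq_bot_iff]
          intro v hv
          by_contra hv0
          obtain ⟨Z, hZ, hZuniq⟩ := hP.2 v hv0
          exact hWne ((hZuniq W ⟨hW.1, hv.1⟩).trans (hZuniq W' ⟨hW'.1, hv.2⟩).symm)
        have hrk : finrank F ↥(W ⊔ W') = d + d' := by
          have := Submodule.finrank_sup_add_finrank_inf_eq W W'
          rw [hdisj, hW.2, hW'.2] at this
          simpa using this
        have := aux_card_hyperplanes_eq_theta q n (d + d') hq (by omega) (W ⊔ W') hrk
        rw [show n - (d + d') = n - d - d' by omega] at this
        rw [← this, ← Finset.filter_filter, Finset.card_filter]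
        refine Finset.sum_congr rfl fun H _ => ?_
        by_cases h1 : W ≤ H <;> by_cases h2 : W' ≤ H <;>
          simp [h1, h2, sup_le_iff]
    _ = Pd.card * Pd'.card * theta q (n - d - d') := by
        simp [Finset.sum_const, mul_assoc]
end

section
/- Let n, k, t, r be integers with 0 ≤ r < t, k ≥ 2, n = kt + r, and set ℓ = q^r · Σ_{i=0}^{k-2} q^{it}. Then V(n,q) admits a subspace partition of size ℓ·q^t + 1, consisting of ℓ·q^t subspaces of dimension t and one subspace of dimension t + r. -/
open Module

/-- ℓ = q^r · Σ_{i=0}^{k-2} q^{it}. -/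
def ell (q k t r : ℕ) : ℕ := q ^ r * ∑ i ∈ Finset.range (k - 1), q ^ (i * t)

universe u

section AuxExt
open Polynomial

lemma exists_finite_ext (F : Type u) [Field F] [Fintype F] (m : ℕ) (hm : 0 < m) :
    ∃ (E : Type u) (_ : Field E) (_ : Algebra F E) (_ : Fintype E),
      FiniteDimensional F E ∧ Module.finrank F E = m ∧
      Fintype.card E = Fintype.card F ^ m := by
  classical
  obtain ⟨e, hp, hq⟩ := FiniteField.card F (ringChar F)
  haveI : Fact (ringChar F).Prime := ⟨hp⟩
  set p := ringChar F with hpdef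
  set Ω := AlgebraicClosure F with hΩ
  haveI : CharP Ω p := charP_of_injective_algebraMap (algebraMap F Ω).injective p
  haveI : ExpChar Ω p := .prime hp
  set N : ℕ := (e : ℕ) * m with hN
  have hN0 : N ≠ 0 := by positivity
  set φ : Ω →+* Ω := iterateFrobenius Ω p N with hφ
  set E : Subfield Ω := φ.eqLocusField (RingHom.id Ω) with hE
  have hmem : ∀ x : Ω, x ∈ E ↔ x ^ p ^ N = x := fun x => Iff.rfl
  set P : Polynomial Ω := X ^ p ^ N - X with hP
  have hP0 : P ≠ 0 := FiniteField.X_pow_card_pow_sub_X_ne_zero Ω hN0 hp.one_lt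
  have hsep : P.Separable := galois_poly_separable p (p ^ N) (dvd_pow_self p hN0)
  have hcardS : Fintype.card (P.rootSet Ω) = p ^ N := by
    rw [card_rootSet_eq_natDegree hsep (IsAlgClosed.splits _),
      FiniteField.X_pow_card_pow_sub_X_natDegree_eq Ω hN0 hp.one_lt]
  have hsetEq : (E : Set Ω) = P.rootSet Ω := by
    ext x
    simp only [SetLike.mem_coe, hmem, mem_rootSet, hP0, ne_eq, not_false_eq_true,
      true_and, hP, map_sub, map_pow, aeval_X]
    rw [and_iff_right (show ¬(X ^ p ^ N - X : Polynomial Ω) = 0 from hP0), sub_eq_zero]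
  have hfin : (E : Set Ω).Finite := by rw [hsetEq]; exact Set.toFinite _
  haveI : Fintype E := hfin.fintype
  have hcardE : Fintype.card E = p ^ N := by
    rw [← hcardS]
    exact Fintype.card_congr (Equiv.setCongr hsetEq)
  have halg : ∀ a : F, algebraMap F Ω a ∈ E := by
    intro a
    rw [hmem, ← map_pow]
    congr 1
    rw [hN, pow_mul, ← hq]
    exact FiniteField.pow_card_pow m a
  letI : Algebra F E := ((algebraMap F Ω).codRestrict E.toSubring halg).toAlgebra
  haveI : FiniteDimensional F E := inferInstance
  have hcard' : Fintype.card E = Fintype.card F ^ m := by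
    rw [hcardE, hq, ← pow_mul, hN]
  have hrank : Module.finrank F E = m := by
    have h1 : Fintype.card E = Fintype.card F ^ Module.finrank F E := card_eq_pow_finrank
    rw [hcard'] at h1
    exact (Nat.pow_right_injective Fintype.one_lt_card h1.symm)
  exact ⟨E, inferInstance, inferInstance, inferInstance, inferInstance, hrank, hcard'⟩

end AuxExt

open scoped Classical in
def GoodPartition (F : Type*) (V : Type*) [Field F] [AddCommGroup V] [Module F V]
    (q k t r : ℕ) : Prop :=
  ∃ P : Finset (Submodule F V), IsSubspacePartition P ∧
    P.card = ell q k t r * q ^ t + 1 ∧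
    ∃ W ∈ P, finrank F ↥W = t + r ∧
      (P.erase W).card = ell q k t r * q ^ t ∧
      ∀ U ∈ P.erase W, finrank F ↥U = t

lemma ell_succ (q t r j : ℕ) :
    ell q (j + 2) t r * q ^ t = q ^ ((j + 1) * t + r) + ell q (j + 1) t r * q ^ t := by
  have h1 : (j + 2) - 1 = j + 1 := rfl
  have h2 : (j + 1) - 1 = j := rfl
  rw [ell, ell, h1, h2, Finset.sum_range_succ, mul_add, add_mul]
  rw [show (j + 1) * t + r = r + (j * t + t) by ring, pow_add, pow_add]
  ring



open scoped Classical in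
lemma step {F : Type u} [Field F] [Fintype F] (q t r k : ℕ) (hq : Fintype.card F = q)
    (hr : r < t) (hk : 1 ≤ k)
    (E : Type u) [Field E] [Algebra F E] [Fintype E] [FiniteDimensional F E]
    (hE : finrank F E = k * t + r) (hcardE : Fintype.card E = q ^ (k * t + r))
    (ih : GoodPartition F E q k t r) :
    GoodPartition F ((Fin t → F) × E) q (k + 1) t r := by
  have ht : 0 < t := Nat.lt_of_le_of_lt (Nat.zero_le r) hr
  have hle : t ≤ finrank F E := by
    rw [hE]
    calc t ≤ k * t := Nat.le_mul_of_pos_left t hk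
      _ ≤ k * t + r := Nat.le_add_right _ _
  set bE := Module.finBasis F E with hbE
  set v : Fin t → E := fun i => bE (Fin.castLE hle i) with hv
  set j : (Fin t → F) →ₗ[F] E := Fintype.linearCombination F v with hj
  have hj_apply : ∀ x, j x = ∑ i, x i • v i := fun x => Fintype.linearCombination_apply F v x
  have hli : LinearIndependent F v := bE.linearIndependent.comp _ (Fin.castLE_injective hle)
  have hjker : ∀ x, j x = 0 → x = 0 := by
    intro x hx
    funext i
    exact Fintype.linearIndependent_iff.mp hli x (by rw [← hj_apply]; exact hx) i
  have hjinj : Function.Injective j := by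
    intro x y hxy
    have := hjker (x - y) (by rw [map_sub, hxy, sub_self])
    exact sub_eq_zero.mp this
  set a₀ : Fin t → F := fun _ => 1 with ha₀def
  have ha₀ : a₀ ≠ 0 := by
    intro h
    exact one_ne_zero (congrFun h ⟨0, ht⟩)
  have hja₀ : j a₀ ≠ 0 := fun h => ha₀ (hjker a₀ h)
  set g : E → ((Fin t → F) →ₗ[F] (Fin t → F) × E) :=
    fun c => LinearMap.prod LinearMap.id (((LinearMap.lsmul E E c).restrictScalars F) ∘ₗ j)
    with hg
  set Γ : E → Submodule F ((Fin t → F) × E) := fun c => LinearMap.range (g c) with hΓ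
  have hmemΓ : ∀ (c : E) (a : Fin t → F) (b : E), (a, b) ∈ Γ c ↔ c * j a = b := by
    intro c a b
    simp only [hΓ, hg, LinearMap.mem_range, LinearMap.prod_apply, LinearMap.coe_comp,
      Function.comp_apply, LinearMap.id_coe, id_eq, LinearMap.restrictScalars_apply,
      LinearMap.lsmul_apply, smul_eq_mul, Function.prod, Prod.mk.injEq]
    constructor
    · rintro ⟨x, rfl, h2⟩; exact h2
    · intro hcb; exact ⟨a, rfl, hcb⟩
  have hΓrank : ∀ c, finrank F ↥(Γ c) = t := by
    intro c
    have hginj : Function.Injective (g c) := by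
      intro x y hxy
      simpa [hg, Function.prod] using congrArg Prod.fst hxy
    rw [hΓ]
    rw [LinearMap.finrank_range_of_inj hginj, Module.finrank_fin_fun]
  have hΓinj : Function.Injective Γ := by
    intro c c' h
    have h1 : (a₀, c * j a₀) ∈ Γ c' := by rw [← h]; exact (hmemΓ c a₀ _).mpr rfl
    exact (mul_right_cancel₀ hja₀ ((hmemΓ c' a₀ _).mp h1)).symm
  set ι : E →ₗ[F] (Fin t → F) × E := LinearMap.inr F (Fin t → F) E with hι
  have hιinj : Function.Injective ι := LinearMap.inr_injective
  have hmapinj : Function.Injective (Submodule.map ι) :=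
    Submodule.map_injective_of_injective hιinj
  have hmemι : ∀ (W : Submodule F E) (a : Fin t → F) (b : E),
      (a, b) ∈ W.map ι ↔ a = 0 ∧ b ∈ W := by
    intro W a b
    simp only [Submodule.mem_map, hι, LinearMap.coe_inr, Prod.mk.injEq]
    constructor
    · rintro ⟨w, hw, h0, rfl⟩; exact ⟨h0.symm, hw⟩
    · rintro ⟨rfl, hb⟩; exact ⟨b, hb, rfl, rfl⟩
  have hΓ_ne_ι : ∀ (c : E) (W : Submodule F E), Γ c ≠ W.map ι := by
    intro c W h
    have h1 : (a₀, c * j a₀) ∈ Γ c := (hmemΓ c a₀ _).mpr rfl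
    rw [h] at h1
    exact ha₀ ((hmemι W a₀ _).mp h1).1
  obtain ⟨P', ⟨hne', hcov'⟩, hcard', W', hW'P, hW'rank, hW'erase, hW'rest⟩ := ih
  set P : Finset (Submodule F ((Fin t → F) × E)) :=
    P'.image (Submodule.map ι) ∪ Finset.univ.image Γ with hP
  have hmemP : ∀ U, U ∈ P ↔ (∃ W ∈ P', U = W.map ι) ∨ ∃ c, U = Γ c := by
    intro U
    simp only [hP, Finset.mem_union, Finset.mem_image, Finset.mem_univ, true_and]
    constructor
    · rintro (⟨W, hW, rfl⟩ | ⟨c, rfl⟩)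
      exacts [Or.inl ⟨W, hW, rfl⟩, Or.inr ⟨c, rfl⟩]
    · rintro (⟨W, hW, rfl⟩ | ⟨c, rfl⟩)
      exacts [Or.inl ⟨W, hW, rfl⟩, Or.inr ⟨c, rfl⟩]
  have hpart : IsSubspacePartition P := by
    constructor
    · intro U hU
      rcases (hmemP U).mp hU with ⟨W, hW, rfl⟩ | ⟨c, rfl⟩
      · obtain ⟨b, hbW, hb0⟩ := (Submodule.ne_bot_iff _).mp (hne' W hW)
        rw [Submodule.ne_bot_iff]
        refine ⟨(0, b), (hmemι W 0 b).mpr ⟨rfl, hbW⟩, ?_⟩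
        simp [Prod.ext_iff, hb0]
      · rw [Submodule.ne_bot_iff]
        refine ⟨(a₀, c * j a₀), (hmemΓ c a₀ _).mpr rfl, ?_⟩
        intro h
        exact ha₀ (Prod.mk_eq_zero.mp h).1
    · rintro ⟨a, b⟩ hv0
      by_cases ha : a = 0
      · subst ha
        have hb : b ≠ 0 := by
          intro h
          exact hv0 (by rw [h]; rfl)
        obtain ⟨W, ⟨hWp, hbW⟩, huniq⟩ := hcov' b hb
        refine ⟨W.map ι, ⟨(hmemP _).mpr (Or.inl ⟨W, hWp, rfl⟩),
          (hmemι W 0 b).mpr ⟨rfl, hbW⟩⟩, ?_⟩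
        rintro U ⟨hU, hvU⟩
        rcases (hmemP U).mp hU with ⟨W'', hW'', rfl⟩ | ⟨c, rfl⟩
        · exact congrArg _ (huniq W'' ⟨hW'', ((hmemι W'' 0 b).mp hvU).2⟩)
        · exfalso
          have hcb := (hmemΓ c 0 b).mp hvU
          rw [map_zero, mul_zero] at hcb
          exact hb hcb.symm
      · have hja : j a ≠ 0 := fun h => ha (hjker a h)
        refine ⟨Γ (b * (j a)⁻¹), ⟨(hmemP _).mpr (Or.inr ⟨_, rfl⟩),
          (hmemΓ _ a b).mpr (inv_mul_cancel_right₀ hja b)⟩, ?_⟩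
        rintro U ⟨hU, hvU⟩
        rcases (hmemP U).mp hU with ⟨W'', hW'', rfl⟩ | ⟨c, rfl⟩
        · exact absurd ((hmemι W'' a b).mp hvU).1 ha
        · have hc := (hmemΓ c a b).mp hvU
          have : b * (j a)⁻¹ = c := by rw [← hc, mul_inv_cancel_right₀ hja]
          rw [this]
  have hdisj : Disjoint (P'.image (Submodule.map ι)) (Finset.univ.image Γ) := by
    rw [Finset.disjoint_right]
    rintro U hU hU'
    obtain ⟨c, _, rfl⟩ := Finset.mem_image.mp hU
    obtain ⟨W'', _, h⟩ := Finset.mem_image.mp hU'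
    exact hΓ_ne_ι c W'' h.symm
  have hcardP : P.card = ell q (k + 1) t r * q ^ t + 1 := by
    rw [hP, Finset.card_union_of_disjoint hdisj,
      Finset.card_image_of_injective _ hmapinj,
      Finset.card_image_of_injective _ hΓinj, hcard', Finset.card_univ, hcardE]
    obtain ⟨k, rfl⟩ : ∃ i, k = i + 1 := ⟨k - 1, (Nat.succ_pred_eq_of_pos hk).symm⟩
    rw [ell_succ]
    ring
  have hWmem : W'.map ι ∈ P := (hmemP _).mpr (Or.inl ⟨W', hW'P, rfl⟩)
  refine ⟨P, hpart, hcardP, W'.map ι, hWmem, ?_, ?_, ?_⟩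
  · exact ((LinearEquiv.finrank_eq (Submodule.equivMapOfInjective _ hιinj W')).symm).trans hW'rank
  · rw [Finset.card_erase_of_mem hWmem, hcardP]
    rfl
  · intro U hU
    obtain ⟨hUne, hUP⟩ := Finset.mem_erase.mp hU
    rcases (hmemP U).mp hUP with ⟨W'', hW'', rfl⟩ | ⟨c, rfl⟩
    · have hne2 : W'' ≠ W' := fun h => hUne (by rw [h])
      exact ((LinearEquiv.finrank_eq (Submodule.equivMapOfInjective _ hιinj W'')).symm).trans
        (hW'rest W'' (Finset.mem_erase.mpr ⟨hne2, hW''⟩))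
    · exact hΓrank c

open scoped Classical in
lemma GoodPartition.transport {F V₁ V₂ : Type*} [Field F] [AddCommGroup V₁] [Module F V₁]
    [AddCommGroup V₂] [Module F V₂] (e : V₁ ≃ₗ[F] V₂) (q k t r : ℕ)
    (h : GoodPartition F V₁ q k t r) : GoodPartition F V₂ q k t r := by
  obtain ⟨P, ⟨hne, hcov⟩, hcard, W, hWP, hWrank, hWerase, hWrest⟩ := h
  set f : Submodule F V₁ → Submodule F V₂ := Submodule.map (e : V₁ →ₗ[F] V₂) with hf
  have hinj : Function.Injective f := Submodule.map_injective_of_injective e.injective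
  have hrank_eq : ∀ U : Submodule F V₁, finrank F ↥(f U) = finrank F ↥U :=
    fun U => (LinearEquiv.finrank_eq (Submodule.equivMapOfInjective _ e.injective U)).symm
  have hmem : ∀ (U : Submodule F V₁) (v : V₂), v ∈ f U ↔ e.symm v ∈ U := by
    intro U v
    constructor
    · rintro ⟨x, hx, rfl⟩; simpa using hx
    · intro hx; exact ⟨e.symm v, hx, by simp⟩
  refine ⟨P.image f, ⟨?_, ?_⟩, ?_, f W, Finset.mem_image_of_mem f hWP, ?_, ?_, ?_⟩
  · rintro U hU
    obtain ⟨U', hU', rfl⟩ := Finset.mem_image.mp hU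
    intro hbot
    exact hne U' hU' (hinj (by rw [hbot, hf]; simp))
  · intro v hv
    obtain ⟨W', ⟨hW'P, hW'v⟩, huniq⟩ := hcov (e.symm v) (by simpa using hv)
    refine ⟨f W', ⟨Finset.mem_image_of_mem f hW'P, (hmem W' v).mpr hW'v⟩, ?_⟩
    rintro U ⟨hU, hvU⟩
    obtain ⟨U', hU', rfl⟩ := Finset.mem_image.mp hU
    exact congrArg f (huniq U' ⟨hU', (hmem U' v).mp hvU⟩)
  · rw [Finset.card_image_of_injective _ hinj, hcard]
  · rw [hrank_eq]; exact hWrank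
  · rw [← Finset.image_erase hinj, Finset.card_image_of_injective _ hinj]; exact hWerase
  · intro U hU
    rw [← Finset.image_erase hinj] at hU
    obtain ⟨U', hU', rfl⟩ := Finset.mem_image.mp hU
    rw [hrank_eq]; exact hWrest U' hU'

lemma good_of_finrank (F : Type u) [Field F] [Fintype F] (q t r : ℕ)
    (hq : Fintype.card F = q) (hr : r < t) :
    ∀ (k : ℕ), 1 ≤ k → ∀ (V : Type u) [AddCommGroup V] [Module F V] [FiniteDimensional F V],
      finrank F V = k * t + r → GoodPartition F V q k t r := by
  have ht : 0 < t := Nat.lt_of_le_of_lt (Nat.zero_le r) hr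
  intro k hk
  induction k, hk using Nat.le_induction with
  | base =>
    intro V _ _ _ hV
    classical
    have hpos : 0 < finrank F V := by rw [hV]; omega
    haveI : Nontrivial V := nontrivial_of_finrank_pos hpos
    refine ⟨{⊤}, ⟨?_, ?_⟩, ?_, ⊤, Finset.mem_singleton_self _, ?_, ?_, ?_⟩
    · intro W hW
      rw [Finset.mem_singleton] at hW
      subst hW
      exact top_ne_bot
    · intro v hv
      exact ⟨⊤, ⟨Finset.mem_singleton_self _, trivial⟩, fun W hW => Finset.mem_singleton.mp hW.1⟩
    · simp [ell]
    · rw [finrank_top, hV, one_mul]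
    · simp [ell]
    · intro U hU
      simp [Finset.erase_singleton] at hU
  | succ k hk ihk =>
    intro V _ _ _ hV
    have hm : 0 < k * t + r := by
      have := Nat.mul_pos hk ht
      omega
    obtain ⟨E, fE, aE, ftE, fdE, hErank, hEcard⟩ := exists_finite_ext F (k * t + r) hm
    letI := fE; letI := aE; letI := ftE; haveI := fdE
    have ihE := ihk E hErank
    have hstep := step q t r k hq hr hk E hErank (by rw [hEcard, hq]) ihE
    have hfr : finrank F ((Fin t → F) × E) = finrank F V := by
      rw [Module.finrank_prod, Module.finrank_fin_fun, hErank, hV]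
      ring
    exact GoodPartition.transport
      (Classical.choice (FiniteDimensional.nonempty_linearEquiv_of_finrank_eq hfr)) _ _ _ _ hstep

open scoped Classical in
theorem exists_partition_min_type {F : Type*} [Field F] [Fintype F]
    (q n k t r : ℕ) (hq : Fintype.card F = q)
    (hk : 2 ≤ k) (hr : r < t) (hn : n = k * t + r) :
    ∃ P : Finset (Submodule F (Fin n → F)), IsSubspacePartition P ∧
      P.card = ell q k t r * q ^ t + 1 ∧
      ∃ W ∈ P, finrank F ↥W = t + r ∧
        (P.erase W).card = ell q k t r * q ^ t ∧
        ∀ U ∈ P.erase W, finrank F ↥U = t := by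
  have h := good_of_finrank F q t r hq hr k (le_trans one_le_two hk) (Fin n → F)
    (by rw [Module.finrank_fin_fun, hn])
  exact h
end

section
/- Let n = kt + r with k ≥ 2, 0 ≤ r < t. Then the maximum size ρ_q(n,t) of a subspace partition of V(n,q) whose smallest member has dimension exactly t equals q^{t+r}·Σ_{i=0}^{k-2} q^{it} + 1. -/
open Module

open Finset Polynomial

section aux

universe u


lemma geom_aux (x j : ℕ) (hx : 1 ≤ x) :
    (∑ i ∈ Finset.range j, x ^ i) * (x - 1) + 1 = x ^ j := by
  induction j with
  | zero => simp
  | succ j ih =>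
    rw [Finset.sum_range_succ, add_mul, pow_succ]
    have h1 : 1 ≤ x ^ j := Nat.one_le_pow _ _ hx
    have h2 : x ^ j * (x - 1) = x ^ j * x - x ^ j := by rw [Nat.mul_sub, mul_one]
    have h3 : x ^ j ≤ x ^ j * x := Nat.le_mul_of_pos_right _ (by omega)
    omega

/-- The purely arithmetic upper bound. -/
lemma arith_bound {ι : Type*} (q t r k : ℕ) (P : Finset ι) (d : ι → ℕ)
    (hq : 2 ≤ q) (hk : 2 ≤ k) (hr : r < t)
    (hd : ∀ i ∈ P, t ≤ d i)
    (hsum : ∑ i ∈ P, q ^ d i = q ^ (k * t + r) - 1 + P.card) :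
    P.card ≤ q ^ (t + r) * ∑ i ∈ Finset.range (k - 1), q ^ (i * t) + 1 := by
  obtain ⟨k', rfl⟩ : ∃ k', k = k' + 2 := ⟨k - 2, by omega⟩
  set n := (k' + 2) * t + r with hn
  set s := P.card with hs
  set T := q ^ (t + r) * ∑ i ∈ Finset.range (k' + 2 - 1), q ^ (i * t) + 1 with hT
  have ht : 1 ≤ t := by omega
  have hq1 : 1 ≤ q := by omega
  have htn : 2 * t ≤ n := by rw [hn]; nlinarith
  have hqn : 2 ≤ q ^ n := by
    calc 2 ≤ q := hq
    _ = q ^ 1 := (pow_one q).symm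
    _ ≤ q ^ n := Nat.pow_le_pow_right hq1 (by omega)
  set x := q ^ t with hx
  have hx2 : 2 ≤ x := by
    calc 2 ≤ q := hq
    _ = q ^ 1 := (pow_one q).symm
    _ ≤ x := Nat.pow_le_pow_right hq1 ht
  -- key identity
  have hgeom : (∑ i ∈ Finset.range (k' + 1), x ^ i) * (x - 1) + 1 = x ^ (k' + 1) :=
    geom_aux _ _ (by omega)
  have hTsum : T - 1 = q ^ (t + r) * ∑ i ∈ Finset.range (k' + 1), x ^ i := by
    have hk1 : k' + 2 - 1 = k' + 1 := rfl
    simp only [hT, Nat.add_sub_cancel, hk1, hx, ← pow_mul, mul_comm]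
  have hkey : q ^ (t + r) + (T - 1) * (x - 1) = q ^ n := by
    rw [hTsum, mul_assoc, ← mul_one_add, add_comm 1, hgeom, hx, ← pow_mul, ← pow_add]
    congr 1
    ring
  -- lower bound on the sum
  have hsx : s * x ≤ ∑ i ∈ P, q ^ d i := by
    calc s * x = ∑ _i ∈ P, x := by rw [Finset.sum_const, smul_eq_mul, hs]
    _ ≤ ∑ i ∈ P, q ^ d i := Finset.sum_le_sum fun i hi => Nat.pow_le_pow_right hq1 (hd i hi)
  have hs1 : 1 ≤ s := by
    rcases P.eq_empty_or_nonempty with rfl | ⟨i, hi⟩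
    · simp at hsum; omega
    · exact Finset.card_pos.mpr ⟨i, hi⟩
  have hle : s * (x - 1) + 1 ≤ q ^ n := by
    have h2 : s * (x - 1) = s * x - s := by rw [Nat.mul_sub, mul_one]
    omega
  -- divisibility
  have hdvd_sum : x ∣ ∑ i ∈ P, q ^ d i :=
    Finset.dvd_sum fun i hi => pow_dvd_pow q (hd i hi)
  have hdvd_n : x ∣ q ^ n := pow_dvd_pow q (by omega)
  have heq : ∑ i ∈ P, q ^ d i = q ^ n + (s - 1) := by omega
  have hdvd_s : x ∣ s - 1 := (Nat.dvd_add_right hdvd_n).mp (heq ▸ hdvd_sum)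
  have hdvd_T : x ∣ T - 1 := hTsum ▸ Dvd.dvd.mul_right
    (pow_dvd_pow q (Nat.le_add_right t r)) _
  -- s < T + x
  have hsT : s < T + x := by
    by_contra hcon
    push_neg at hcon
    set y := x - 1 with hy
    have hy1 : 1 ≤ y := by omega
    set z := q ^ (t - 1) with hz
    have hz1 : 1 ≤ z := Nat.one_le_pow _ _ (by omega)
    have h2z : 2 * z ≤ x := by
      calc 2 * z ≤ q * z := Nat.mul_le_mul_right z hq
      _ = x := by rw [hz, hx, ← pow_succ']; congr 1; omega
    have hzy : z ≤ y := by omega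
    have h1 : q ^ (t + r) ≤ x * z := by
      rw [hx, hz, ← pow_add]
      exact Nat.pow_le_pow_right hq1 (by omega)
    set m := s - (T - 1) with hm
    have hm1 : x + 1 ≤ m := by omega
    have hsm : s = (T - 1) + m := by omega
    have hA : (T - 1) * y + m * y + 1 ≤ q ^ (t + r) + (T - 1) * y := by
      rw [← add_mul, ← hsm]
      calc s * y + 1 ≤ q ^ n := hle
      _ = q ^ (t + r) + (T - 1) * y := hkey.symm
    have h2 : (x + 1) * y ≤ m * y := Nat.mul_le_mul_right y hm1
    have h3 : x * y + y = (x + 1) * y := by ring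
    have h4 : x * z ≤ x * y := Nat.mul_le_mul_left x hzy
    linarith
  -- conclude via divisibility
  obtain ⟨α, hα⟩ := hdvd_s
  obtain ⟨β, hβ⟩ := hdvd_T
  have hT1 : 1 ≤ T := by rw [hT]; omega
  have : x * α < x * (β + 1) := by
    rw [Nat.mul_add, mul_one, ← hα, ← hβ]; omega
  have hαβ : α ≤ β := by
    have := Nat.lt_of_mul_lt_mul_left this
    omega
  have : s - 1 ≤ T - 1 := by
    rw [hα, hβ]; exact Nat.mul_le_mul_left x hαβ
  omega


lemma exists_field_ext (F : Type u) [Field F] [Fintype F] (m : ℕ) (hm : m ≠ 0) :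
    ∃ (B : Type u) (_ : Field B) (_ : Algebra F B) (_ : Fintype B),
      Fintype.card B = Fintype.card F ^ m := by
  classical
  set q := Fintype.card F with hq
  obtain ⟨p, hp⟩ := CharP.exists F
  haveI := hp
  have hp' : p.Prime := by
    have := Fintype.card_pos (α := F)
    exact CharP.char_is_prime F p
  haveI : Fact p.Prime := ⟨hp'⟩
  obtain ⟨e, _, hqe⟩ := FiniteField.card F p
  have hqpm : q ^ m = p ^ ((e : ℕ) * m) := by
    rw [hq, hqe, ← pow_mul]
  have hpq : p ∣ q ^ m := by
    rw [hqpm]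
    exact dvd_pow_self p (by positivity)
  set Ω := AlgebraicClosure F
  have hsep : Separable (X ^ q ^ m - X : F[X]) := galois_poly_separable p (q ^ m) hpq
  have hsplits : Splits ((X ^ q ^ m - X : F[X]).map (algebraMap F Ω)) := IsAlgClosed.splits _
  have hq2 : 1 < q := Fintype.one_lt_card
  have hqm1 : 1 < q ^ m := Nat.one_lt_pow hm hq2
  have hdeg : (X ^ q ^ m - X : F[X]).natDegree = q ^ m := by
    rw [hqpm]
    exact FiniteField.X_pow_card_pow_sub_X_natDegree_eq F (by positivity) hp'.one_lt
  have hcardroot : Fintype.card ((X ^ q ^ m - X : F[X]).rootSet Ω) = q ^ m := by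
    rw [card_rootSet_eq_natDegree hsep hsplits, hdeg]
  have hne : (X ^ q ^ m - X : F[X]) ≠ 0 := by
    intro h
    have := congrArg natDegree h
    rw [hdeg, natDegree_zero] at this
    omega
  -- the subfield of Ω fixed by x ↦ x^(q^m)
  set B : Subfield Ω := RingHom.eqLocusField (iterateFrobenius Ω p (e * m)) (RingHom.id Ω)
    with hB
  have hmemB : ∀ x : Ω, x ∈ B ↔ x ^ q ^ m = x := by
    intro x
    rw [hB]
    constructor
    · intro h
      have : (iterateFrobenius Ω p (e * m)) x = x := h
      rwa [iterateFrobenius_def, ← hqpm] at this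
    · intro h
      show (iterateFrobenius Ω p (e * m)) x = x
      rwa [iterateFrobenius_def, ← hqpm]
  have hBroot : (B : Set Ω) = (X ^ q ^ m - X : F[X]).rootSet Ω := by
    ext x
    rw [SetLike.mem_coe, hmemB, mem_rootSet_of_ne hne]
    simp only [map_sub, map_pow, aeval_X, sub_eq_zero]
  have hiff : ∀ x : Ω, x ∈ B ↔ x ∈ (X ^ q ^ m - X : F[X]).rootSet Ω := by
    intro x
    rw [← SetLike.mem_coe, hBroot]
  haveI : Fintype B := Fintype.ofEquiv _ (Equiv.subtypeEquivRight fun x => (hiff x).symm)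
  have hcardB : Fintype.card B = q ^ m := by
    rw [← hcardroot]
    exact Fintype.card_congr (Equiv.subtypeEquivRight fun x => hiff x)
  have halg : ∀ a : F, algebraMap F Ω a ∈ B := by
    intro a
    rw [hmemB, ← map_pow, FiniteField.pow_card_pow]
  letI : Algebra F B := ((algebraMap F Ω).codRestrict B halg).toAlgebra
  exact ⟨↥B, inferInstance, inferInstance, inferInstance, hcardB⟩


open Classical in
lemma partition_count {F V : Type*} [Field F] [AddCommGroup V] [Module F V]
    [Fintype V] (P : Finset (Submodule F V)) (hP : IsSubspacePartition P) :
    ∑ W ∈ P, Nat.card W = Fintype.card V - 1 + P.card := by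
  set f : Submodule F V → Finset V := fun W => Finset.univ.filter (· ∈ W) \ {0} with hf
  have hcard : ∀ W ∈ P, (f W).card = Nat.card W - 1 := by
    intro W _
    rw [hf]
    have h0 : {0} ⊆ Finset.univ.filter (· ∈ W) := by
      simp [Finset.singleton_subset_iff, W.zero_mem]
    rw [Finset.card_sdiff_of_subset h0, Finset.card_singleton, Nat.card_eq_fintype_card,
      Fintype.card_subtype]
  have hdisj : ∀ W ∈ P, ∀ W' ∈ P, W ≠ W' → Disjoint (f W) (f W') := by
    intro W hW W' hW' hne
    rw [Finset.disjoint_left]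
    intro v hv hv'
    simp only [hf, Finset.mem_sdiff, Finset.mem_filter, Finset.mem_singleton,
      Finset.mem_univ, true_and] at hv hv'
    obtain ⟨U, _, hU⟩ := hP.2 v hv.2
    exact hne ((hU W ⟨hW, hv.1⟩).trans (hU W' ⟨hW', hv'.1⟩).symm)
  have hunion : P.biUnion f = Finset.univ \ {0} := by
    ext v
    simp only [hf, Finset.mem_biUnion, Finset.mem_sdiff, Finset.mem_filter,
      Finset.mem_singleton, Finset.mem_univ, true_and]
    constructor
    · rintro ⟨W, _, _, hv0⟩; exact hv0
    · intro hv0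
      obtain ⟨W, ⟨hWP, hvW⟩, _⟩ := hP.2 v hv0
      exact ⟨W, hWP, hvW, hv0⟩
  have hsum : ∑ W ∈ P, (f W).card = Fintype.card V - 1 := by
    rw [← Finset.card_biUnion hdisj, hunion, Finset.card_sdiff_of_subset (by simp),
      Finset.card_singleton, Finset.card_univ]
  have hpos : ∀ W ∈ P, 1 ≤ Nat.card W := by
    intro W _
    haveI : Nonempty W := ⟨0, W.zero_mem⟩
    exact Nat.card_pos
  calc ∑ W ∈ P, Nat.card W = ∑ W ∈ P, ((f W).card + 1) := by
        apply Finset.sum_congr rfl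
        intro W hW
        rw [hcard W hW]
        have := hpos W hW
        omega
  _ = (Fintype.card V - 1) + P.card := by
        rw [Finset.sum_add_distrib, hsum, Finset.sum_const, smul_eq_mul, mul_one]

lemma card_submodule {F V : Type*} [Field F] [Fintype F] [AddCommGroup V] [Module F V]
    [Fintype V] (W : Submodule F V) : Nat.card W = Fintype.card F ^ finrank F ↥W := by
  classical
  have h := card_eq_pow_finrank (K := F) (V := ↥W)
  rw [Nat.card_eq_fintype_card, h]

lemma partition_transport {F V V' : Type*} [Field F] [AddCommGroup V] [Module F V]
    [AddCommGroup V'] [Module F V'] (e : V ≃ₗ[F] V') (P : Finset (Submodule F V))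
    (hP : IsSubspacePartition P) :
    ∃ P' : Finset (Submodule F V'), IsSubspacePartition P' ∧ P'.card = P.card ∧
      ∀ d : ℕ, (∃ W ∈ P', finrank F W = d) ↔ (∃ W ∈ P, finrank F W = d) := by
  classical
  have hinj : Function.Injective (Submodule.map (e : V →ₗ[F] V')) :=
    Submodule.map_injective_of_injective e.injective
  refine ⟨P.image (Submodule.map (e : V →ₗ[F] V')), ⟨?_, ?_⟩, Finset.card_image_of_injective _ hinj, ?_⟩
  · intro W' hW'
    obtain ⟨W, hW, rfl⟩ := Finset.mem_image.mp hW'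
    intro hbot
    apply hP.1 W hW
    apply hinj
    rw [hbot, Submodule.map_bot]
  · intro v' hv'
    have hv : e.symm v' ≠ 0 := by
      intro h
      apply hv'
      rw [← e.apply_symm_apply v', h, map_zero]
    obtain ⟨W, ⟨hWP, hvW⟩, huniq⟩ := hP.2 (e.symm v') hv
    refine ⟨W.map (e : V →ₗ[F] V'), ⟨Finset.mem_image_of_mem _ hWP, ?_⟩, ?_⟩
    · exact ⟨e.symm v', hvW, e.apply_symm_apply v'⟩
    · rintro Y ⟨hY, hvY⟩
      obtain ⟨W₀, hW₀, rfl⟩ := Finset.mem_image.mp hY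
      obtain ⟨w, hw, hwe⟩ := hvY
      have hws : w = e.symm v' := by rw [← hwe]; exact (e.symm_apply_apply w).symm
      subst hws
      exact congrArg _ (huniq W₀ ⟨hW₀, hw⟩)
  · intro d
    constructor
    · rintro ⟨W', hW', rfl⟩
      obtain ⟨W, hW, rfl⟩ := Finset.mem_image.mp hW'
      exact ⟨W, hW, (LinearEquiv.finrank_map_eq e W).symm ▸ rfl⟩
    · rintro ⟨W, hW, rfl⟩
      exact ⟨W.map (e : V →ₗ[F] V'), Finset.mem_image_of_mem _ hW,
        LinearEquiv.finrank_map_eq e W⟩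

lemma partition_step {F : Type u} [Field F] [Fintype F] {B : Type u} [Field B] [Algebra F B]
    [Fintype B] (t : ℕ) (ht : 1 ≤ t) (htm : t ≤ finrank F B)
    (P : Finset (Submodule F B)) (hP : IsSubspacePartition P) :
    ∃ P' : Finset (Submodule F ((Fin t → F) × B)),
      IsSubspacePartition P' ∧ P'.card = Fintype.card B + P.card ∧
      (∀ W ∈ P', finrank F W = t ∨ ∃ W₀ ∈ P, finrank F W = finrank F W₀) ∧
      (∃ W ∈ P', finrank F W = t) := by
  classical
  haveI : Module.Finite F B := Module.finite_iff_finite.mpr inferInstance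
  set m := finrank F B with hm
  -- injective linear map σ : (Fin t → F) →ₗ[F] B
  set g : Fin m → Fin t := fun i => if h : (i : ℕ) < t then ⟨i, h⟩ else ⟨0, ht⟩ with hg
  have hgsurj : Function.Surjective g := by
    intro j
    refine ⟨⟨(j : ℕ), lt_of_lt_of_le j.2 htm⟩, ?_⟩
    simp [hg, j.2]
  obtain ⟨eB⟩ : Nonempty ((Fin m → F) ≃ₗ[F] B) :=
    FiniteDimensional.nonempty_linearEquiv_of_finrank_eq (by rw [finrank_fin_fun])
  set σ : (Fin t → F) →ₗ[F] B := (eB : (Fin m → F) →ₗ[F] B).comp (LinearMap.funLeft F F g)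
    with hσ
  have hσinj : Function.Injective σ :=
    eB.injective.comp (LinearMap.funLeft_injective_of_surjective F F g hgsurj)
  -- the graph members
  set φ : B → ((Fin t → F) →ₗ[F] B) := fun b => (LinearMap.mulLeft F b).comp σ with hφ
  have hφapp : ∀ b x, φ b x = b * σ x := fun b x => rfl
  set G : B → Submodule F ((Fin t → F) × B) := fun b => LinearMap.range (LinearMap.prod LinearMap.id (φ b)) with hG
  have hmemG : ∀ b v, v ∈ G b ↔ φ b v.1 = v.2 := by
    intro b v
    constructor
    · rintro ⟨x, rfl⟩; rfl
    · intro h; exact ⟨v.1, Prod.ext rfl h⟩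
  -- a fixed nonzero vector of Fin t → F
  haveI : Nonempty (Fin t) := ⟨⟨0, ht⟩⟩
  set a₀ : Fin t → F := Function.const _ 1 with ha₀
  have ha₀ne : a₀ ≠ 0 := by
    intro h
    have := congrFun h (Classical.arbitrary (Fin t))
    simp [ha₀] at this
  have hσa₀ : ∀ a : Fin t → F, a ≠ 0 → σ a ≠ 0 := by
    intro a ha h
    exact ha (hσinj (by rw [h, map_zero]))
  -- G is injective
  have hGinj : Function.Injective G := by
    intro b b' hbb'
    have h1 : (a₀, φ b a₀) ∈ G b := (hmemG b _).mpr rfl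
    rw [hbb'] at h1
    have h2 := (hmemG b' _).mp h1
    simp only [hφapp] at h2
    exact (mul_right_cancel₀ (hσa₀ a₀ ha₀ne) h2).symm
  -- bottom members
  set Q : Finset (Submodule F ((Fin t → F) × B)) := P.image (fun W => Submodule.prod (⊥ : Submodule F (Fin t → F)) W)
    with hQ
  have hprodinj : Function.Injective (fun W : Submodule F B => Submodule.prod (⊥ : Submodule F (Fin t → F)) W) := by
    intro W W' h
    simp only at h
    ext w
    constructor
    · intro hw
      have : ((0 : Fin t → F), w) ∈ Submodule.prod (⊥ : Submodule F (Fin t → F)) W := ⟨Submodule.zero_mem _, hw⟩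
      rw [h] at this
      exact this.2
    · intro hw
      have : ((0 : Fin t → F), w) ∈ Submodule.prod (⊥ : Submodule F (Fin t → F)) W' := ⟨Submodule.zero_mem _, hw⟩
      rw [← h] at this
      exact this.2
  set P' : Finset (Submodule F ((Fin t → F) × B)) :=
    (Finset.univ : Finset B).image G ∪ Q with hP'
  have hGnotQ : ∀ b : B, G b ∉ Q := by
    intro b hbQ
    obtain ⟨W, _, hW⟩ := Finset.mem_image.mp hbQ
    have h1 : (a₀, φ b a₀) ∈ G b := (hmemG b _).mpr rfl
    rw [← hW] at h1
    exact ha₀ne h1.1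
  have hdisj : Disjoint ((Finset.univ : Finset B).image G) Q := by
    rw [Finset.disjoint_left]
    rintro X hX hXQ
    obtain ⟨b, _, rfl⟩ := Finset.mem_image.mp hX
    exact hGnotQ b hXQ
  -- finrank of graphs
  have hrankG : ∀ b, finrank F (G b) = t := by
    intro b
    have hinj : Function.Injective (LinearMap.prod LinearMap.id (φ b)) := by
      intro x y h
      have := congrArg Prod.fst h
      exact this
    rw [hG]
    rw [LinearMap.finrank_range_of_inj hinj, finrank_fin_fun]
  -- finrank of bottom members
  have hrankQ : ∀ W : Submodule F B, finrank F (Submodule.prod (⊥ : Submodule F (Fin t → F)) W) = finrank F W := by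
    intro W
    rw [← Submodule.map_inr]
    exact (LinearEquiv.finrank_eq
      (Submodule.equivMapOfInjective _ (LinearMap.inr_injective) W)).symm
  refine ⟨P', ⟨?_, ?_⟩, ?_, ?_, ?_⟩
  -- members nonzero
  · intro W hW
    rcases Finset.mem_union.mp hW with hWG | hWQ
    · obtain ⟨b, _, rfl⟩ := Finset.mem_image.mp hWG
      intro hbot
      have h1 : (a₀, φ b a₀) ∈ G b := (hmemG b _).mpr rfl
      rw [hbot] at h1
      exact ha₀ne (congrArg Prod.fst (Submodule.mem_bot _ |>.mp h1))
    · obtain ⟨W₀, hW₀, rfl⟩ := Finset.mem_image.mp hWQ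
      intro hbot
      obtain ⟨w, hw, hwne⟩ := Submodule.exists_mem_ne_zero_of_ne_bot (hP.1 W₀ hW₀)
      have : ((0 : Fin t → F), w) ∈ Submodule.prod ⊥ W₀ := ⟨Submodule.zero_mem _, hw⟩
      rw [hbot] at this
      exact hwne (congrArg Prod.snd (Submodule.mem_bot _ |>.mp this))
  -- existence and uniqueness
  · rintro ⟨a, c⟩ hv
    by_cases ha : a = 0
    · subst ha
      have hc : c ≠ 0 := by
        intro h; exact hv (by rw [h]; rfl)
      obtain ⟨W, ⟨hWP, hcW⟩, huniq⟩ := hP.2 c hc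
      refine ⟨Submodule.prod ⊥ W, ⟨Finset.mem_union_right _ (Finset.mem_image_of_mem _ hWP),
        ⟨Submodule.zero_mem _, hcW⟩⟩, ?_⟩
      rintro Y ⟨hY, hcY⟩
      rcases Finset.mem_union.mp hY with hYG | hYQ
      · obtain ⟨b, _, rfl⟩ := Finset.mem_image.mp hYG
        have := (hmemG b _).mp hcY
        simp only [hφapp] at this
        rw [map_zero, mul_zero] at this
        exact absurd this.symm hc
      · obtain ⟨W₀, hW₀, rfl⟩ := Finset.mem_image.mp hYQ
        exact congrArg _ (huniq W₀ ⟨hW₀, hcY.2⟩)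
    · set b : B := c * (σ a)⁻¹ with hb
      have hσa : σ a ≠ 0 := hσa₀ a ha
      have hbc : φ b a = c := by
        rw [hφapp, hb, inv_mul_cancel_right₀ hσa]
      refine ⟨G b, ⟨Finset.mem_union_left _ (Finset.mem_image_of_mem _ (Finset.mem_univ b)),
        (hmemG b _).mpr hbc⟩, ?_⟩
      rintro Y ⟨hY, hcY⟩
      rcases Finset.mem_union.mp hY with hYG | hYQ
      · obtain ⟨b', _, rfl⟩ := Finset.mem_image.mp hYG
        have h2 := (hmemG b' _).mp hcY
        simp only [hφapp] at h2
        have : b' = b := by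
          rw [hb, ← h2, mul_inv_cancel_right₀ hσa]
        rw [this]
      · obtain ⟨W₀, _, rfl⟩ := Finset.mem_image.mp hYQ
        exact absurd hcY.1 ha
  -- cardinality
  · rw [hP', Finset.card_union_of_disjoint hdisj,
      Finset.card_image_of_injective _ hGinj,
      Finset.card_image_of_injective _ hprodinj, Finset.card_univ]
  -- ranks
  · intro W hW
    rcases Finset.mem_union.mp hW with hWG | hWQ
    · obtain ⟨b, _, rfl⟩ := Finset.mem_image.mp hWG
      exact Or.inl (hrankG b)
    · obtain ⟨W₀, hW₀, rfl⟩ := Finset.mem_image.mp hWQ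
      exact Or.inr ⟨W₀, hW₀, hrankQ W₀⟩
  -- a member of rank t
  · exact ⟨G 0, Finset.mem_union_left _ (Finset.mem_image_of_mem _ (Finset.mem_univ 0)),
      hrankG 0⟩


lemma exists_partition (F : Type u) [Field F] [Fintype F] (t r : ℕ) (ht : 1 ≤ t) (hr : r < t) :
    ∀ j : ℕ, ∃ P : Finset (Submodule F (Fin ((j+1)*t + r) → F)),
      IsSubspacePartition P ∧ (∀ W ∈ P, finrank F W = t ∨ finrank F W = t + r) ∧
      (1 ≤ j → ∃ W ∈ P, finrank F W = t) ∧
      P.card = 1 + ∑ i ∈ Finset.range j, (Fintype.card F) ^ ((i+1)*t + r) := by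
  intro j
  induction j with
  | zero =>
    haveI : Nonempty (Fin ((0+1)*t + r)) := ⟨⟨0, by omega⟩⟩
    refine ⟨{⊤}, ⟨?_, ?_⟩, ?_, fun h => absurd h (by omega), by simp⟩
    · intro W hW
      rw [Finset.mem_singleton] at hW
      subst hW
      intro hbot
      obtain ⟨v, hv⟩ := exists_ne (0 : Fin ((0+1)*t + r) → F)
      exact hv ((Submodule.mem_bot F).mp (hbot ▸ Submodule.mem_top))
    · intro v hv
      exact ⟨⊤, ⟨Finset.mem_singleton_self _, Submodule.mem_top⟩,
        by rintro Y ⟨hY, -⟩; exact Finset.mem_singleton.mp hY⟩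
    · intro W hW
      rw [Finset.mem_singleton] at hW
      subst hW
      right
      rw [finrank_top, finrank_fin_fun]
      omega
  | succ j ih =>
    set m := (j+1)*t + r with hm
    obtain ⟨P, hP, hranks, hextq, hcard⟩ := ih
    have htm' : t ≤ m := by rw [hm]; nlinarith
    obtain ⟨B, _, _, _, hcardB⟩ := exists_field_ext F m (by omega)
    haveI : Module.Finite F B := Module.finite_iff_finite.mpr inferInstance
    have hq2 : 1 < Fintype.card F := Fintype.one_lt_card
    have hfinrB : finrank F B = m := by
      have h1 : Fintype.card B = Fintype.card F ^ finrank F B := card_eq_pow_finrank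
      exact (Nat.pow_right_injective hq2 (hcardB.symm.trans h1)).symm
    obtain ⟨eB⟩ : Nonempty ((Fin m → F) ≃ₗ[F] B) :=
      FiniteDimensional.nonempty_linearEquiv_of_finrank_eq (by rw [finrank_fin_fun, hfinrB])
    obtain ⟨PB, hPB, hPBcard, hPBranks⟩ := partition_transport eB P hP
    obtain ⟨P', hP', hP'card, hP'ranks, hP'ext⟩ :=
      partition_step t ht (by rw [hfinrB]; exact htm') PB hPB
    have hfr : finrank F ((Fin t → F) × B) = (j+1+1)*t + r := by
      rw [Module.finrank_prod, finrank_fin_fun, hfinrB, hm]; ring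
    obtain ⟨e2⟩ : Nonempty (((Fin t → F) × B) ≃ₗ[F] (Fin ((j+1+1)*t + r) → F)) :=
      FiniteDimensional.nonempty_linearEquiv_of_finrank_eq (by rw [hfr, finrank_fin_fun])
    obtain ⟨P'', hP'', hP''card, hP''ranks⟩ := partition_transport e2 P' hP'
    refine ⟨P'', hP'', ?_, fun _ => (hP''ranks t).mpr hP'ext, ?_⟩
    · intro W hW
      obtain ⟨W', hW', hW'eq⟩ := (hP''ranks (finrank F W)).mp ⟨W, hW, rfl⟩
      rcases hP'ranks W' hW' with h | ⟨W₀, hW₀, heq⟩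
      · left; omega
      · obtain ⟨W₁, hW₁, hW₁eq⟩ := (hPBranks (finrank F W₀)).mp ⟨W₀, hW₀, rfl⟩
        rcases hranks W₁ hW₁ with h1 | h1
        · left; omega
        · right; omega
    · rw [hP''card, hP'card, hPBcard, hcard, hcardB, Finset.sum_range_succ, ← hm]
      ring

end aux

/-- ρ_q(n,t) is the greatest element of the set of sizes of subspace partitions of
V(n,q) whose smallest member has dimension t. -/
theorem rho_eq {F : Type*} [Field F] [Fintype F]
    (q n k t r : ℕ) (hq : Fintype.card F = q)
    (hk : 2 ≤ k) (hr : r < t) (hn : n = k * t + r) :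
    IsGreatest {m : ℕ | ∃ P : Finset (Submodule F (Fin n → F)),
        IsSubspacePartition P ∧ (∀ W ∈ P, t ≤ finrank F ↥W) ∧
        (∃ W ∈ P, finrank F ↥W = t) ∧ P.card = m}
      (q ^ (t + r) * ∑ i ∈ Finset.range (k - 1), q ^ (i * t) + 1) := by
  subst hn
  have hq2 : 2 ≤ q := by rw [← hq]; exact Fintype.one_lt_card
  have ht : 1 ≤ t := by omega
  constructor
  · -- membership: the construction
    have hk1 : k - 1 + 1 = k := by omega
    have hstmt := exists_partition F t r ht hr (k - 1)
    rw [hk1] at hstmt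
    obtain ⟨P, hP, hranks, hext, hcard⟩ := hstmt
    refine ⟨P, hP, ?_, hext (by omega), ?_⟩
    · intro W hW
      rcases hranks W hW with h | h <;> omega
    · rw [hcard, hq, Finset.mul_sum]
      rw [Finset.sum_congr rfl (fun i (_ : i ∈ Finset.range (k-1)) =>
        (show q ^ ((i+1)*t + r) = q ^ (t + r) * q ^ (i * t) by
          rw [← pow_add]; congr 1; ring))]
      ring
  · -- upper bound
    rintro s ⟨P, hP, hge, -, rfl⟩
    have hcount := partition_count P hP
    have hV : Fintype.card (Fin (k*t+r) → F) = q ^ (k*t+r) := by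
      rw [Fintype.card_fun, Fintype.card_fin, hq]
    have hsum : ∑ W ∈ P, q ^ (finrank F ↥W) = q ^ (k*t+r) - 1 + P.card := by
      rw [← hV, ← hcount]
      exact Finset.sum_congr rfl fun W _ => by rw [card_submodule, hq]
    exact arith_bound q t r k P (fun W => finrank F ↥W) hq2 hk hr hge hsum
end

section
/- Let Π be a subspace partition of V(n,q) in which every member has dimension at least t, where n = kt + r, k ≥ 2, 0 ≤ r < t. If ℓ = q^r·Σ_{i=0}^{k-2} q^{it}, then |Π| ≤ ℓ·q^t + 1. -/
open Module

set_option maxHeartbeats 1000000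

theorem partition_card_upper_bound {F : Type*} [Field F] [Fintype F]
    (q n k t r : ℕ) (hq : Fintype.card F = q)
    (hk : 2 ≤ k) (hr : r < t) (hn : n = k * t + r)
    (P : Finset (Submodule F (Fin n → F))) (hP : IsSubspacePartition P)
    (hmin : ∀ W ∈ P, t ≤ finrank F ↥W) :
    P.card ≤ ell q k t r * q ^ t + 1 := by
  classical
  have hq2 : 2 ≤ q := by
    rw [← hq]; exact Fintype.one_lt_card
  have ht1 : 1 ≤ t := by omega
  have hn1 : 1 ≤ n := by
    have : 2 * 1 ≤ k * t := Nat.mul_le_mul hk ht1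
    omega
  -- a nonzero vector
  set v0 : Fin n → F := fun _ => (1 : F) with hv0def
  have hv0 : v0 ≠ 0 := by
    intro h
    have := congrFun h ⟨0, by omega⟩
    simp [hv0def] at this
  -- the finsets of nonzero vectors of each member
  set N : Submodule F (Fin n → F) → Finset (Fin n → F) :=
    fun W => Finset.univ.filter (fun v => v ∈ W ∧ v ≠ 0) with hNdef
  have hmemN : ∀ (W : Submodule F (Fin n → F)) (v : Fin n → F),
      v ∈ N W ↔ v ∈ W ∧ v ≠ 0 := by
    intro W v; simp [hNdef]
  -- cover
  have hcover : Finset.univ.filter (fun v : Fin n → F => v ≠ 0) = P.biUnion N := by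
    ext v
    simp only [Finset.mem_filter, Finset.mem_univ, true_and, Finset.mem_biUnion]
    constructor
    · intro hv
      obtain ⟨W, ⟨hWP, hvW⟩, -⟩ := hP.2 v hv
      exact ⟨W, hWP, (hmemN W v).2 ⟨hvW, hv⟩⟩
    · rintro ⟨W, -, hvW⟩
      exact ((hmemN W v).1 hvW).2
  -- disjointness
  have hdisj : ∀ W₁ ∈ P, ∀ W₂ ∈ P, W₁ ≠ W₂ → Disjoint (N W₁) (N W₂) := by
    intro W₁ h₁ W₂ h₂ hne
    refine Finset.disjoint_left.2 ?_
    intro v hv₁ hv₂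
    obtain ⟨hvW₁, hv0'⟩ := (hmemN W₁ v).1 hv₁
    obtain ⟨hvW₂, -⟩ := (hmemN W₂ v).1 hv₂
    obtain ⟨W, -, huniq⟩ := hP.2 v hv0'
    exact hne ((huniq W₁ ⟨h₁, hvW₁⟩).trans (huniq W₂ ⟨h₂, hvW₂⟩).symm)
  -- the card of N W
  have hNW : ∀ W ∈ P, (N W).card = q ^ (finrank F W) - 1 := by
    intro W _
    have h0 : Fintype.card W = q ^ finrank F W := by
      rw [← hq]; exact card_eq_pow_finrank (K := F)
    have hNe : N W = (Set.toFinset (W : Set (Fin n → F))).erase 0 := by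
      ext v
      simp only [hmemN, Finset.mem_erase, Set.mem_toFinset, SetLike.mem_coe]
      tauto
    rw [hNe, Finset.card_erase_of_mem (by simp [Set.mem_toFinset]),
      Set.toFinset_card, ← h0]
    congr 1
  -- total count
  have hsum : ∑ W ∈ P, (N W).card = q ^ n - 1 := by
    rw [← Finset.card_biUnion hdisj, ← hcover, Finset.filter_ne',
      Finset.card_erase_of_mem (Finset.mem_univ 0), Finset.card_univ,
      Fintype.card_fun, Fintype.card_fin, hq]
  -- lower bound on each member's point count
  have hqt1 : 1 ≤ q ^ t := Nat.one_le_pow _ _ (by omega)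
  have hqn1 : 1 ≤ q ^ n := Nat.one_le_pow _ _ (by omega)
  have h1 : P.card * (q ^ t - 1) ≤ q ^ n - 1 := by
    rw [← hsum]
    have := Finset.card_nsmul_le_sum P (fun W => (N W).card) (q ^ t - 1) ?_
    · simpa using this
    · intro W hW
      show q ^ t - 1 ≤ (N W).card
      rw [hNW W hW]
      exact Nat.sub_le_sub_right (Nat.pow_le_pow_right (by omega) (hmin W hW)) 1
  -- P is nonempty
  have hcard1 : 1 ≤ P.card := by
    obtain ⟨W, ⟨hWP, -⟩, -⟩ := hP.2 v0 hv0
    exact Finset.card_pos.2 ⟨W, hWP⟩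
  -- divisibility: q^t ∣ P.card - 1
  have hsum2 : ∑ W ∈ P, q ^ (finrank F W) = (q ^ n - 1) + P.card := by
    rw [← hsum, Finset.card_eq_sum_ones P, ← Finset.sum_add_distrib]
    apply Finset.sum_congr rfl
    intro W hW
    rw [hNW W hW]
    have : 1 ≤ q ^ finrank F W := Nat.one_le_pow _ _ (by omega)
    omega
  have hdvdS : q ^ t ∣ ∑ W ∈ P, q ^ (finrank F W) :=
    Finset.dvd_sum fun W hW => pow_dvd_pow q (hmin W hW)
  have htn : t ≤ n := by
    have : 1 * t ≤ k * t := Nat.mul_le_mul_right t (by omega)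
    omega
  have hdvdn : q ^ t ∣ q ^ n := pow_dvd_pow q htn
  have hdvdP : q ^ t ∣ P.card - 1 := by
    have heq : P.card - 1 = (∑ W ∈ P, q ^ (finrank F W)) - q ^ n := by omega
    rw [heq]
    exact Nat.dvd_sub hdvdS hdvdn
  obtain ⟨m, hm⟩ := hdvdP
  have hcardm : P.card = q ^ t * m + 1 := by omega
  -- conclude: m ≤ ℓ
  rw [hcardm]
  have hmle : m ≤ ell q k t r := by
    by_contra hcon
    clear hsum hcover hdisj hmemN hNW hsum2 hdvdS hP hmin hv0 hm
    push_neg at hcon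
    -- cast everything to ℤ
    set X : ℤ := (q : ℤ) ^ t with hX
    set R : ℤ := (q : ℤ) ^ r with hR
    set S : ℤ := ∑ i ∈ Finset.range (k - 1), X ^ i with hS
    have hellZ : (ell q k t r : ℤ) = R * S := by
      rw [ell, hR, hS, hX]
      push_cast
      congr 1
      apply Finset.sum_congr rfl
      intro i _
      rw [← pow_mul, mul_comm]
    have hgeo : S * (X - 1) = X ^ (k - 1) - 1 := geom_sum_mul X (k - 1)
    have hpowk : X ^ k = X ^ (k - 1) * X := by
      rw [← pow_succ]
      congr 1
      omega
    have hqnZ : ((q : ℤ)) ^ n = R * X ^ k := by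
      rw [hn, pow_add, mul_comm k t, pow_mul, hX, hR, mul_comm]
    have hZ : (X * (m : ℤ) + 1) * (X - 1) ≤ (q : ℤ) ^ n - 1 := by
      have := h1
      rw [hcardm] at this
      zify [hqt1, hqn1] at this
      linarith [this]
    have hRX : R < X := by
      rw [hR, hX]
      exact_mod_cast Nat.pow_lt_pow_right (by omega) hr
    have hX1 : (1 : ℤ) ≤ X := by
      rw [hX]; exact_mod_cast hqt1
    have hkey : (X * ((ell q k t r : ℤ) + 1) + 1) * (X - 1)
        = R * X ^ k - R * X + X ^ 2 - 1 := by
      rw [hellZ]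
      linear_combination X * R * hgeo - R * hpowk
    have hmZ : (ell q k t r : ℤ) + 1 ≤ (m : ℤ) := by exact_mod_cast hcon
    have hmono : (X * ((ell q k t r : ℤ) + 1) + 1) * (X - 1) ≤ (X * m + 1) * (X - 1) := by
      have h0X : (0 : ℤ) ≤ X := by linarith
      nlinarith [mul_nonneg (mul_nonneg h0X (sub_nonneg.2 hmZ)) (sub_nonneg.2 hX1)]
    have hZ' : (X * (m : ℤ) + 1) * (X - 1) ≤ R * X ^ k - 1 := by
      rw [← hqnZ]; exact hZ
    have hfin : X ^ 2 ≤ R * X := by linarith [hkey, hmono, hZ']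
    nlinarith [mul_lt_mul_of_pos_right hRX (show (0 : ℤ) < X by linarith), hfin]
  calc q ^ t * m + 1 ≤ q ^ t * ell q k t r + 1 :=
        by exact Nat.add_le_add_right (Nat.mul_le_mul_left _ hmle) 1
    _ = ell q k t r * q ^ t + 1 := by ring
end

section
/- Let Π be a subspace partition of V(n,q) in which every member has dimension at least t ≥ 1. Then |Π| ≡ 1 (mod q^t). -/
open Module

theorem partition_card_mod {F : Type*} [Field F] [Fintype F]
    (q n t : ℕ) (hq : Fintype.card F = q) (ht : 1 ≤ t) (hn : t < n)
    (P : Finset (Submodule F (Fin n → F))) (hP : IsSubspacePartition P)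
    (hmin : ∀ W ∈ P, t ≤ finrank F ↥W) :
    P.card ≡ 1 [MOD q ^ t] := by
  classical
  have hq1 : 1 ≤ q := by
    rw [← hq]; exact Fintype.card_pos
  -- the nonzero vectors of each member
  set S : Submodule F (Fin n → F) → Finset (Fin n → F) :=
    fun W => (Finset.univ.filter (· ∈ W)).erase 0 with hS
  -- partition of nonzero vectors
  have hunion : (Finset.univ.erase (0 : Fin n → F)) = P.biUnion S := by
    ext v
    simp only [Finset.mem_erase, Finset.mem_biUnion, hS, Finset.mem_filter,
      Finset.mem_univ, true_and, and_true]
    constructor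
    · intro hv
      obtain ⟨W, ⟨hWP, hvW⟩, -⟩ := hP.2 v hv
      exact ⟨W, hWP, hv, hvW⟩
    · rintro ⟨W, -, hv, -⟩
      exact hv
  have hdisj : ∀ W₁ ∈ P, ∀ W₂ ∈ P, W₁ ≠ W₂ → Disjoint (S W₁) (S W₂) := by
    intro W₁ h₁ W₂ h₂ hne
    rw [Finset.disjoint_left]
    intro v hv₁ hv₂
    simp only [hS, Finset.mem_erase, Finset.mem_filter] at hv₁ hv₂
    obtain ⟨W, -, huniq⟩ := hP.2 v hv₁.1
    exact hne ((huniq W₁ ⟨h₁, hv₁.2.2⟩).trans (huniq W₂ ⟨h₂, hv₂.2.2⟩).symm)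
  have hScard : ∀ W ∈ P, (S W).card = q ^ finrank F ↥W - 1 := by
    intro W hW
    have h0 : (0 : Fin n → F) ∈ Finset.univ.filter (· ∈ W) := by
      simp [W.zero_mem]
    rw [hS]
    rw [Finset.card_erase_of_mem h0]
    congr 1
    rw [← hq, ← card_eq_pow_finrank (K := F) (V := ↥W)]
    rw [Fintype.card_subtype]
  -- total count
  have hcount : ∑ W ∈ P, (S W).card = q ^ n - 1 := by
    rw [← Finset.card_biUnion hdisj, ← hunion,
      Finset.card_erase_of_mem (Finset.mem_univ _), Finset.card_univ]
    congr 1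
    rw [Fintype.card_fun, hq, Fintype.card_fin]
  have hsum : ∑ W ∈ P, q ^ finrank F ↥W = q ^ n - 1 + P.card := by
    calc ∑ W ∈ P, q ^ finrank F ↥W = ∑ W ∈ P, ((S W).card + 1) := by
          refine Finset.sum_congr rfl fun W hW => ?_
          rw [hScard W hW, Nat.sub_add_cancel (Nat.one_le_pow _ _ hq1)]
      _ = (∑ W ∈ P, (S W).card) + P.card := by
          rw [Finset.sum_add_distrib, Finset.card_eq_sum_ones]
      _ = q ^ n - 1 + P.card := by rw [hcount]
  -- pass to ZMod (q ^ t)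
  have key : ∀ m : ℕ, t ≤ m → ((q ^ m : ℕ) : ZMod (q ^ t)) = 0 := by
    intro m hm
    have : q ^ m = q ^ t * q ^ (m - t) := by
      rw [← pow_add, Nat.add_sub_cancel' hm]
    rw [this, Nat.cast_mul, ZMod.natCast_self, zero_mul]
  have hz : ((∑ W ∈ P, q ^ finrank F ↥W : ℕ) : ZMod (q ^ t)) = 0 := by
    rw [Nat.cast_sum]
    exact Finset.sum_eq_zero fun W hW => key _ (hmin W hW)
  rw [hsum] at hz
  have hqn1 : 1 ≤ q ^ n := Nat.one_le_pow _ _ hq1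
  rw [Nat.cast_add, Nat.cast_sub hqn1, key n hn.le] at hz
  rw [← ZMod.natCast_eq_natCast_iff]
  push_cast
  linear_combination hz
end

section
/- Let d, d', n be integers with 0 < d' < d ≤ n/2, and q a prime power. Then σ_q(n,d) < σ_q(n,d'), i.e., the minimum size of a subspace partition of V(n,q) whose largest member has dimension d is strictly less than that with largest member of dimension d'. Concretely, using that θ_n/θ_t ≤ σ_q(n,t) < θ_n/θ_t + q^{⌈(t+r)/2⌉} with r = n mod t and θ_i = (q^i-1)/(q-1), one has σ_q(n,d) < 2θ_n/θ_d ≤ qθ_n/θ_d < θ_n/θ_{d-1} ≤ σ_q(n,d-1). -/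
open Module

/-- The set of sizes of subspace partitions of V(n,q) whose largest member has
dimension exactly `t`. -/
def partitionSizes (F : Type*) [Field F] [Fintype F] (n t : ℕ) : Set ℕ :=
  {m : ℕ | ∃ P : Finset (Submodule F (Fin n → F)),
    IsSubspacePartition P ∧ (∀ W ∈ P, finrank F ↥W ≤ t) ∧
    (∃ W ∈ P, finrank F ↥W = t) ∧ P.card = m}

open Polynomial

set_option linter.unusedSectionVars false

universe u



lemma exists_extension (F : Type u) [Field F] [Fintype F] (b : ℕ) (hb : 0 < b) :
    ∃ (K : Type u) (_i1 : Field K), ∃ (_i2 : @Algebra F K _ (by infer_instance)) (_i3 : Fintype K),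
      Fintype.card K = (Fintype.card F) ^ b ∧ finrank F K = b := by
  obtain ⟨p, hcp⟩ := CharP.exists F
  haveI : CharP F p := hcp
  obtain ⟨k, hp, hcard⟩ := FiniteField.card F p
  haveI : Fact p.Prime := ⟨hp⟩
  set m : ℕ := (k : ℕ) * b with hm
  have hmne : m ≠ 0 := by positivity
  letI L0 := GaloisField p m
  haveI : Fintype L0 := Fintype.ofFinite L0
  have hcardL0 : Fintype.card L0 = p ^ m := by
    have := GaloisField.card p m hmne
    rwa [Nat.card_eq_fintype_card] at this
  letI : Algebra (ZMod p) F := ZMod.algebra F p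
  haveI : IsSplittingField (ZMod p) F (X ^ p ^ (k:ℕ) - X) :=
    FiniteField.isSplittingField_of_card_eq _ _ hcard
  -- divisibility
  have hdvd : (X ^ p ^ (k:ℕ) - X : (ZMod p)[X]) ∣ X ^ p ^ m - X := by
    have h1 : p ^ (k:ℕ) - 1 ∣ p ^ m - 1 := by
      have : p ^ m = (p ^ (k:ℕ)) ^ b := by rw [hm, pow_mul]
      rw [this]
      simpa using Nat.sub_dvd_pow_sub_pow (p ^ (k:ℕ)) 1 b
    obtain ⟨c, hc⟩ := h1
    have h2 : ((X:(ZMod p)[X]) ^ (p ^ (k:ℕ) - 1) - 1) ∣ (X ^ (p ^ m - 1) - 1) := by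
      have : (X:(ZMod p)[X]) ^ (p ^ m - 1) = (X ^ (p ^ (k:ℕ) - 1)) ^ c := by
        rw [← pow_mul, ← hc]
      rw [this]
      simpa using sub_dvd_pow_sub_pow ((X:(ZMod p)[X]) ^ (p ^ (k:ℕ) - 1)) 1 c
    have e1 : (X ^ p ^ (k:ℕ) - X : (ZMod p)[X]) = X * (X ^ (p ^ (k:ℕ) - 1) - 1) := by
      have h3 : p ^ (k:ℕ) = (p ^ (k:ℕ) - 1) + 1 :=
        (Nat.succ_pred_eq_of_pos (pow_pos hp.pos _)).symm
      rw [mul_sub, mul_one, ← pow_succ']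
      rw [← h3]
    have e2 : (X ^ p ^ m - X : (ZMod p)[X]) = X * (X ^ (p ^ m - 1) - 1) := by
      have h3 : p ^ m = (p ^ m - 1) + 1 :=
        (Nat.succ_pred_eq_of_pos (pow_pos hp.pos _)).symm
      rw [mul_sub, mul_one, ← pow_succ']
      rw [← h3]
    rw [e1, e2]
    exact mul_dvd_mul_left _ h2
  have hsplitsbig : Splits ((X ^ p ^ m - X : (ZMod p)[X]).map (algebraMap (ZMod p) L0)) :=
    @IsSplittingField.splits _ _ _ _ _ _ (instIsSplittingFieldZModGaloisFieldHSubPolynomialHPowNatX p m)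
  have hsplits : Splits ((X ^ p ^ (k:ℕ) - X : (ZMod p)[X]).map (algebraMap (ZMod p) L0)) :=
    Splits.of_dvd hsplitsbig (Polynomial.map_ne_zero (FiniteField.X_pow_card_sub_X_ne_zero (ZMod p)
      (Nat.one_lt_pow hmne hp.one_lt))) (Polynomial.map_dvd _ hdvd)
  let φ : F →ₐ[ZMod p] L0 := IsSplittingField.lift F (X ^ p ^ (k:ℕ) - X) hsplits
  let K : Type u := ULift.{u} L0
  letI : Field K := inferInstance
  let ψ : F →+* K := (ULift.ringEquiv (R := L0)).symm.toRingHom.comp φ.toRingHom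
  letI : Algebra F K := ψ.toAlgebra
  haveI : Fintype K := inferInstance
  have hcardK : Fintype.card K = (Fintype.card F) ^ b := by
    have h0 : Fintype.card K = Fintype.card L0 := Fintype.card_congr Equiv.ulift
    rw [h0, hcardL0, hcard, hm, pow_mul]
  refine ⟨K, inferInstance, inferInstance, inferInstance, hcardK, ?_⟩
  have h := card_eq_pow_finrank (K := F) (V := K)
  rw [hcardK] at h
  exact (Nat.pow_right_injective Fintype.one_lt_card h.symm)

section Model

variable {F : Type*} [Field F] (K : Type*) [Field K] [Algebra F K] [Fintype K]
  (A : Submodule F K)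

/-- the graph subspace {(γ y, y) : y ∈ A} -/
noncomputable def graphSub (γ : K) : Submodule F (K × ↥A) :=
  LinearMap.range (((LinearMap.mulLeft F γ).comp A.subtype).prod LinearMap.id)

lemma mem_graphSub {γ : K} {x : K × ↥A} :
    x ∈ graphSub K A γ ↔ ∃ y : ↥A, (γ * ↑y, y) = x := by
  simp [graphSub, LinearMap.mem_range, LinearMap.prod_apply]

lemma mem_fst' {x : K × ↥A} : x ∈ Submodule.fst F K ↥A ↔ x.2 = 0 := by
  simp [Submodule.fst]

open scoped Classical in
noncomputable def modelPartition : Finset (Submodule F (K × ↥A)) :=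
  insert (Submodule.fst F K ↥A) (Finset.image (graphSub K A) Finset.univ)

variable (hA : A ≠ ⊥)
include hA

open scoped Classical in
lemma modelPartition_spec :
    IsSubspacePartition (modelPartition K A) ∧
    (Submodule.fst F K ↥A) ∈ modelPartition K A ∧
    (∀ W ∈ modelPartition K A, W ≠ Submodule.fst F K ↥A →
      finrank F ↥W = finrank F ↥A) ∧
    finrank F ↥(Submodule.fst F K ↥A) = finrank F K ∧
    (modelPartition K A).card = Fintype.card K + 1 := by
  obtain ⟨y₀, hy₀A, hy₀⟩ : ∃ y ∈ A, y ≠ 0 := by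
    by_contra h
    push_neg at h
    exact hA ((Submodule.eq_bot_iff A).mpr h)
  set y0 : ↥A := ⟨y₀, hy₀A⟩ with hy0def
  have hy0ne : y0 ≠ 0 := by simpa [hy0def, Submodule.mk_eq_zero] using hy₀
  have hfst_mem : (Submodule.fst F K ↥A) ∈ modelPartition K A := Finset.mem_insert_self _ _
  have hmemP : ∀ W ∈ modelPartition K A, W = Submodule.fst F K ↥A ∨ ∃ γ, W = graphSub K A γ := by
    intro W hW
    rcases Finset.mem_insert.mp hW with h | h
    · exact Or.inl h
    · obtain ⟨γ, -, rfl⟩ := Finset.mem_image.mp h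
      exact Or.inr ⟨γ, rfl⟩
  have hfst_ne : ∀ γ : K, Submodule.fst F K ↥A ≠ graphSub K A γ := by
    intro γ h
    have h1 : ((1 : K), (0 : ↥A)) ∈ Submodule.fst F K ↥A := (mem_fst' K A).mpr rfl
    rw [h] at h1
    obtain ⟨y, hy⟩ := (mem_graphSub K A).mp h1
    have hy2 : y = 0 := congrArg Prod.snd hy
    have hy1 : γ * ↑y = 1 := congrArg Prod.fst hy
    rw [hy2] at hy1
    simp at hy1
  have hgraph_inj : Function.Injective (graphSub K A) := by
    intro γ γ' h
    have h1 : (γ * ↑y0, y0) ∈ graphSub K A γ := (mem_graphSub K A).mpr ⟨y0, rfl⟩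
    rw [h] at h1
    obtain ⟨z, hz⟩ := (mem_graphSub K A).mp h1
    have hz2 : z = y0 := congrArg Prod.snd hz
    have hz1 : γ' * ↑z = γ * ↑y0 := congrArg Prod.fst hz
    rw [hz2] at hz1
    exact (mul_right_cancel₀ hy₀ hz1).symm
  refine ⟨⟨?_, ?_⟩, hfst_mem, ?_, ?_, ?_⟩
  · -- nonbot
    intro W hW
    rcases hmemP W hW with rfl | ⟨γ, rfl⟩
    · intro h
      have : ((1:K), (0:↥A)) ∈ (⊥ : Submodule F (K × ↥A)) := h ▸ (mem_fst' K A).mpr rfl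
      simp [Prod.ext_iff] at this
    · intro h
      have : (γ * ↑y0, y0) ∈ (⊥ : Submodule F (K × ↥A)) := h ▸ (mem_graphSub K A).mpr ⟨y0, rfl⟩
      rw [Submodule.mem_bot, Prod.ext_iff] at this
      exact hy0ne this.2
  · -- existence and uniqueness
    rintro ⟨u, w⟩ hv
    by_cases hw : w = 0
    · subst hw
      refine ⟨Submodule.fst F K ↥A, ⟨hfst_mem, (mem_fst' K A).mpr rfl⟩, ?_⟩
      rintro W ⟨hWP, hWv⟩
      rcases hmemP W hWP with rfl | ⟨γ, rfl⟩
      · rfl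
      · obtain ⟨y, hy⟩ := (mem_graphSub K A).mp hWv
        have hy2 : y = 0 := congrArg Prod.snd hy
        have hy1 : γ * ↑y = u := congrArg Prod.fst hy
        rw [hy2] at hy1
        simp at hy1
        exact absurd (by simp [Prod.ext_iff, hy1]) hv
    · have hwK : (w : K) ≠ 0 := by simpa [Submodule.coe_eq_zero] using hw
      refine ⟨graphSub K A (u * (w : K)⁻¹), ⟨Finset.mem_insert_of_mem
        (Finset.mem_image.mpr ⟨_, Finset.mem_univ _, rfl⟩), ?_⟩, ?_⟩
      · refine (mem_graphSub K A).mpr ⟨w, ?_⟩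
        rw [Prod.mk.injEq]
        exact ⟨by rw [mul_assoc, inv_mul_cancel₀ hwK, mul_one], rfl⟩
      · rintro W ⟨hWP, hWv⟩
        rcases hmemP W hWP with rfl | ⟨γ, rfl⟩
        · exact absurd ((mem_fst' K A).mp hWv) hw
        · obtain ⟨y, hy⟩ := (mem_graphSub K A).mp hWv
          have hy2 : y = w := congrArg Prod.snd hy
          have hy1 : γ * ↑y = u := congrArg Prod.fst hy
          rw [hy2] at hy1
          congr 1
          rw [← hy1, mul_assoc, mul_inv_cancel₀ hwK, mul_one]
  · -- dims of graphs
    intro W hW hne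
    rcases hmemP W hW with rfl | ⟨γ, rfl⟩
    · exact absurd rfl hne
    · unfold graphSub
      rw [LinearMap.finrank_range_of_inj]
      intro y z h
      exact congrArg Prod.snd h
  · exact LinearEquiv.finrank_eq (Submodule.fstEquiv F K ↥A)
  · rw [modelPartition, Finset.card_insert_of_notMem, Finset.card_image_of_injective _ hgraph_inj,
      Finset.card_univ]
    intro h
    obtain ⟨γ, -, hγ⟩ := Finset.mem_image.mp h
    exact hfst_ne γ hγ.symm

end Model

section Transport

variable {F V V' : Type*} [Field F] [AddCommGroup V] [Module F V]
  [AddCommGroup V'] [Module F V']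

lemma transport_partition (e : V ≃ₗ[F] V') {P : Finset (Submodule F V')}
    (hP : IsSubspacePartition P) :
    ∃ Q : Finset (Submodule F V), IsSubspacePartition Q ∧ Q.card = P.card ∧
      (∀ W ∈ Q, ∃ W' ∈ P, finrank F ↥W = finrank F ↥W') ∧
      (∀ W' ∈ P, ∃ W ∈ Q, finrank F ↥W = finrank F ↥W') := by
  classical
  have hinj : Function.Injective (Submodule.map (e.symm : V' →ₗ[F] V)) :=
    Submodule.map_injective_of_injective e.symm.injective
  refine ⟨P.image (Submodule.map (e.symm : V' →ₗ[F] V)), ⟨?_, ?_⟩,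
    Finset.card_image_of_injective _ hinj, ?_, ?_⟩
  · rintro W hW
    obtain ⟨W', hW', rfl⟩ := Finset.mem_image.mp hW
    intro h
    apply hP.1 W' hW'
    rw [Submodule.eq_bot_iff]
    intro x hx
    have hx2 : e.symm x ∈ Submodule.map (e.symm : V' →ₗ[F] V) W' := ⟨x, hx, rfl⟩
    rw [h, Submodule.mem_bot] at hx2
    simpa using congrArg e hx2
  · intro v hv
    have hev : e v ≠ 0 := fun h => hv (by simpa using congrArg e.symm h)
    obtain ⟨W', ⟨hW'P, hW'v⟩, huniq⟩ := hP.2 (e v) hev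
    refine ⟨W'.map (e.symm : V' →ₗ[F] V), ⟨Finset.mem_image_of_mem _ hW'P, ?_⟩, ?_⟩
    · exact ⟨e v, hW'v, by simp⟩
    · rintro X ⟨hXP, hXv⟩
      obtain ⟨X', hX'P, rfl⟩ := Finset.mem_image.mp hXP
      have : e v ∈ X' := by
        obtain ⟨y, hy, hyv⟩ := hXv
        have : y = e v := by
          have := congrArg e hyv
          simpa using this
        rwa [← this]
      rw [huniq X' ⟨hX'P, this⟩]
  · intro W hW
    obtain ⟨W', hW', rfl⟩ := Finset.mem_image.mp hW
    exact ⟨W', hW', LinearEquiv.finrank_map_eq e.symm W'⟩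
  · intro W' hW'
    exact ⟨W'.map (e.symm : V' →ₗ[F] V), Finset.mem_image_of_mem _ hW',
      LinearEquiv.finrank_map_eq e.symm W'⟩

end Transport

section Glue
variable {F V : Type*} [Field F] [AddCommGroup V] [Module F V]

open scoped Classical in
lemma glue_partition {P : Finset (Submodule F V)} (hP : IsSubspacePartition P)
    {W : Submodule F V} (hW : W ∈ P)
    {Q : Finset (Submodule F ↥W)} (hQ : IsSubspacePartition Q) :
    IsSubspacePartition ((P.erase W) ∪ Q.image (Submodule.map W.subtype)) := by
  classical
  constructor
  · intro X hX
    rcases Finset.mem_union.mp hX with h | h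
    · exact hP.1 X (Finset.mem_of_mem_erase h)
    · obtain ⟨U, hU, rfl⟩ := Finset.mem_image.mp h
      intro hbot
      apply hQ.1 U hU
      rw [Submodule.eq_bot_iff]
      intro x hx
      have hx2 : (x : V) ∈ Submodule.map W.subtype U := ⟨x, hx, rfl⟩
      rw [hbot, Submodule.mem_bot] at hx2
      exact Submodule.coe_eq_zero.mp hx2
  · intro v hv
    obtain ⟨X, ⟨hXP, hXv⟩, huniq⟩ := hP.2 v hv
    by_cases hXW : X = W
    · subst hXW
      have hvW : (⟨v, hXv⟩ : ↥X) ≠ 0 := by simpa using hv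
      obtain ⟨U, ⟨hUQ, hUv⟩, hUuniq⟩ := hQ.2 _ hvW
      refine ⟨U.map X.subtype, ⟨Finset.mem_union_right _ (Finset.mem_image_of_mem _ hUQ),
        ⟨_, hUv, rfl⟩⟩, ?_⟩
      rintro Y ⟨hYP, hYv⟩
      rcases Finset.mem_union.mp hYP with h | h
      · exfalso
        have := huniq Y ⟨Finset.mem_of_mem_erase h, hYv⟩
        exact (Finset.ne_of_mem_erase h) this
      · obtain ⟨U', hU', rfl⟩ := Finset.mem_image.mp h
        obtain ⟨y, hy, hyv⟩ := hYv
        have hyeq : y = ⟨v, hXv⟩ := Subtype.ext hyv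
        rw [hUuniq U' ⟨hU', hyeq ▸ hy⟩]
    · refine ⟨X, ⟨Finset.mem_union_left _ (Finset.mem_erase.mpr ⟨hXW, hXP⟩), hXv⟩, ?_⟩
      rintro Y ⟨hYP, hYv⟩
      rcases Finset.mem_union.mp hYP with h | h
      · exact huniq Y ⟨Finset.mem_of_mem_erase h, hYv⟩
      · exfalso
        obtain ⟨U', hU', rfl⟩ := Finset.mem_image.mp h
        obtain ⟨y, hy, hyv⟩ := hYv
        have hvW : v ∈ W := hyv ▸ y.2
        exact hXW (huniq W ⟨hW, hvW⟩).symm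

end Glue

lemma exists_submodule_of_le {F M : Type*} [Field F] [AddCommGroup M] [Module F M]
    [FiniteDimensional F M] {a : ℕ} (h : a ≤ finrank F M) :
    ∃ A : Submodule F M, finrank F ↥A = a := by
  let bK := Module.finBasis F M
  refine ⟨Submodule.span F (Set.range (bK ∘ Fin.castLE h)), ?_⟩
  rw [finrank_span_eq_card (bK.linearIndependent.comp _ (Fin.castLE_injective h))]
  simp

lemma model_exists (F : Type u) [Field F] [Fintype F] (a b : ℕ) (ha : 0 < a)
    (hab : a ≤ b) :
    ∃ (M : Type u) (_iAG : AddCommGroup M), ∃ (_iM : Module F M)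
      (_iFD : FiniteDimensional F M),
      finrank F M = a + b ∧
      ∃ (P : Finset (Submodule F M)) (Wb : Submodule F M),
        IsSubspacePartition P ∧ Wb ∈ P ∧ finrank F ↥Wb = b ∧
        (∀ W ∈ P, W ≠ Wb → finrank F ↥W = a) ∧
        P.card = (Fintype.card F) ^ b + 1 := by
  obtain ⟨K, _iK, _iAlg, _iFin, hcardK, hrankK⟩ :=
    exists_extension F b (lt_of_lt_of_le ha hab)
  haveI : FiniteDimensional F K := Module.Finite.of_finite
  obtain ⟨A, hA⟩ := exists_submodule_of_le (M := K) (a := a) (by rw [hrankK]; exact hab)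
  have hAne : A ≠ ⊥ := by
    intro h
    rw [h, finrank_bot] at hA
    omega
  haveI : Finite ↥A := Subtype.finite
  haveI : FiniteDimensional F (K × ↥A) := Module.Finite.of_finite
  obtain ⟨hpart, hfstmem, hdims, hfstrank, hcard⟩ := modelPartition_spec K A hAne
  refine ⟨K × ↥A, inferInstance, inferInstance, inferInstance, ?_,
    modelPartition K A, Submodule.fst F K ↥A, hpart, hfstmem, ?_, ?_, ?_⟩
  · rw [finrank_prod, hA, hrankK]; omega
  · rw [hfstrank, hrankK]
  · intro W hW hne
    rw [hdims W hW hne, hA]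
  · rw [hcard, hcardK]

lemma exists_good_partition (F : Type u) [Field F] [Fintype F] (d : ℕ) (hd : 0 < d) :
    ∀ m : ℕ, d ≤ m → ∀ (V : Type u) (_iAG : AddCommGroup V) (_iM : Module F V)
      (_iFD : FiniteDimensional F V), finrank F V = m →
      ∃ P : Finset (Submodule F V), IsSubspacePartition P ∧
        (∀ W ∈ P, finrank F ↥W ≤ d) ∧ (∃ W ∈ P, finrank F ↥W = d) ∧
        P.card ≤ 2 * (Fintype.card F) ^ (max (m - d) d) := by
  intro m
  induction m using Nat.strong_induction_on with
  | _ m IH =>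
  intro hdm V _iAG _iM _iFD hV
  have hq2 : 2 ≤ Fintype.card F := Fintype.one_lt_card
  rcases eq_or_lt_of_le hdm with heq | hlt
  · -- m = d : take {⊤}
    haveI : Nontrivial V := Module.nontrivial_of_finrank_pos (R := F) (by omega)
    obtain ⟨x, hx⟩ := exists_ne (0 : V)
    refine ⟨{⊤}, ⟨?_, ?_⟩, ?_, ?_, ?_⟩
    · intro W hW
      rw [Finset.mem_singleton] at hW
      subst hW
      intro h
      exact hx (Submodule.mem_bot F |>.mp (h ▸ Submodule.mem_top))
    · intro v hv
      exact ⟨⊤, ⟨Finset.mem_singleton_self _, Submodule.mem_top⟩,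
        fun Y hY => Finset.mem_singleton.mp hY.1⟩
    · intro W hW
      rw [Finset.mem_singleton] at hW
      subst hW
      rw [finrank_top, hV, ← heq]
    · exact ⟨⊤, Finset.mem_singleton_self _, by rw [finrank_top, hV, ← heq]⟩
    · have h1 : 0 < Fintype.card F ^ max (m - d) d := by positivity
      rw [Finset.card_singleton]
      omega
  · -- d < m
    have key : ∀ a b : ℕ, 0 < a → a ≤ d → d ≤ b → a + b = m →
        (∃ (M : Type u) (_iAG : AddCommGroup M), ∃ (_iM : Module F M)
          (_iFD : FiniteDimensional F M),
          finrank F M = m ∧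
          ∃ P : Finset (Submodule F M), IsSubspacePartition P ∧
            (∀ W ∈ P, finrank F ↥W ≤ d) ∧ (∃ W ∈ P, finrank F ↥W = d) ∧
            ((b = d ∧ P.card = (Fintype.card F) ^ b + 1) ∨
             (d < b ∧ P.card ≤ (Fintype.card F) ^ b + 2 * (Fintype.card F) ^ (max (b - d) d)))) := by
      intro a b ha had hdb hab
      obtain ⟨M, _jAG, _jM, _jFD, hrankM, P0, Wb, hP0, hWbmem, hWbrank, hothers, hcard0⟩ :=
        model_exists F a b ha (le_trans had hdb)
      rcases eq_or_lt_of_le hdb with hbd | hbd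
    -- case b = d : P0 works directly
      · refine ⟨M, _jAG, _jM, _jFD, by omega, P0, hP0, ?_, ⟨Wb, hWbmem, by omega⟩,
          Or.inl ⟨hbd.symm, hcard0⟩⟩
        intro W hW
        by_cases hWWb : W = Wb
        · subst hWWb; omega
        · rw [hothers W hW hWWb]; exact had
      · -- case d < b : recurse into Wb
        haveI : FiniteDimensional F ↥Wb := inferInstance
        obtain ⟨Q, hQpart, hQdims, ⟨U, hUQ, hUrank⟩, hQcard⟩ :=
          IH b (by omega) hdb ↥Wb inferInstance inferInstance inferInstance hWbrank
        classical
        refine ⟨M, _jAG, _jM, _jFD, by omega,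
          (P0.erase Wb) ∪ Q.image (Submodule.map Wb.subtype),
          glue_partition hP0 hWbmem hQpart, ?_, ?_, Or.inr ⟨hbd, ?_⟩⟩
        · intro W hW
          rcases Finset.mem_union.mp hW with h | h
          · rw [hothers W (Finset.mem_of_mem_erase h) (Finset.ne_of_mem_erase h)]
            exact had
          · obtain ⟨U', hU', rfl⟩ := Finset.mem_image.mp h
            rw [Submodule.finrank_map_subtype_eq]
            exact hQdims U' hU'
        · refine ⟨U.map Wb.subtype, Finset.mem_union_right _ (Finset.mem_image_of_mem _ hUQ), ?_⟩
          rw [Submodule.finrank_map_subtype_eq]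
          exact hUrank
        · calc ((P0.erase Wb) ∪ Q.image (Submodule.map Wb.subtype)).card
              ≤ (P0.erase Wb).card + (Q.image (Submodule.map Wb.subtype)).card :=
                Finset.card_union_le _ _
            _ ≤ (Fintype.card F) ^ b + 2 * (Fintype.card F) ^ (max (b - d) d) := by
                have h1 : (P0.erase Wb).card = P0.card - 1 := Finset.card_erase_of_mem hWbmem
                have h2 : (Q.image (Submodule.map Wb.subtype)).card ≤ Q.card :=
                  Finset.card_image_le
                omega
    -- use key with appropriate a b and transport
    by_cases hm2 : m ≤ 2 * d
    · obtain ⟨M, _jAG, _jM, _jFD, hrankM, P, hPpart, hPdims, hPex, hPcard⟩ :=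
        key (m - d) d (by omega) (by omega) le_rfl (by omega)
      have e : V ≃ₗ[F] M := LinearEquiv.ofFinrankEq _ _ (by rw [hV, hrankM])
      obtain ⟨Q, hQpart, hQcard, hQdims, hQsurj⟩ := transport_partition e hPpart
      refine ⟨Q, hQpart, ?_, ?_, ?_⟩
      · intro W hW
        obtain ⟨W', hW', h⟩ := hQdims W hW
        rw [h]; exact hPdims W' hW'
      · obtain ⟨W', hW', hW'r⟩ := hPex
        obtain ⟨W, hWQ, hWr⟩ := hQsurj W' hW'
        exact ⟨W, hWQ, by rw [hWr, hW'r]⟩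
      · rcases hPcard with ⟨-, hc⟩ | ⟨hdb, -⟩
        · rw [hQcard, hc]
          have h1 : 1 ≤ Fintype.card F ^ d := Nat.one_le_pow _ _ (by omega)
          have h2 : Fintype.card F ^ d ≤ Fintype.card F ^ (max (m - d) d) :=
            Nat.pow_le_pow_right (by omega) (le_max_right _ _)
          omega
        · omega
    · obtain ⟨M, _jAG, _jM, _jFD, hrankM, P, hPpart, hPdims, hPex, hPcard⟩ :=
        key d (m - d) hd le_rfl (by omega) (by omega)
      have e : V ≃ₗ[F] M := LinearEquiv.ofFinrankEq _ _ (by rw [hV, hrankM])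
      obtain ⟨Q, hQpart, hQcard, hQdims, hQsurj⟩ := transport_partition e hPpart
      refine ⟨Q, hQpart, ?_, ?_, ?_⟩
      · intro W hW
        obtain ⟨W', hW', h⟩ := hQdims W hW
        rw [h]; exact hPdims W' hW'
      · obtain ⟨W', hW', hW'r⟩ := hPex
        obtain ⟨W, hWQ, hWr⟩ := hQsurj W' hW'
        exact ⟨W, hWQ, by rw [hWr, hW'r]⟩
      · rcases hPcard with ⟨hc, -⟩ | ⟨hdb, hc⟩
        · omega
        · rw [hQcard]
          -- P.card ≤ q^b + 2 q^{max(b-d) d} ≤ 2 q^{m-d},  b = m - d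
          have hb : m - d = max (m - d) d := by omega
          have hmax : max (m - d - d) d ≤ m - d - 1 := by omega
          have h2 : 2 * Fintype.card F ^ (max (m - d - d) d) ≤
              2 * Fintype.card F ^ (m - d - 1) :=
            Nat.mul_le_mul_left _ (Nat.pow_le_pow_right (by omega) hmax)
          have h3 : 2 * Fintype.card F ^ (m - d - 1) ≤ Fintype.card F ^ (m - d) := by
            have : m - d = (m - d - 1) + 1 := by omega
            rw [this, pow_succ]
            calc 2 * Fintype.card F ^ (m - d - 1)
                = Fintype.card F ^ (m - d - 1) * 2 := by ring
              _ ≤ Fintype.card F ^ (m - d - 1) * Fintype.card F := Nat.mul_le_mul_left _ hq2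
          rw [← hb]
          omega

/-- σ_q(n,d) < σ_q(n,d') for 0 < d' < d ≤ n/2. -/
theorem sigma_antimonotone {F : Type*} [Field F] [Fintype F]
    (q n d d' : ℕ) (hq : Fintype.card F = q)
    (hd' : 0 < d') (hdd' : d' < d) (hd : 2 * d ≤ n)
    (a b : ℕ) (ha : IsLeast (partitionSizes F n d) a)
    (hb : IsLeast (partitionSizes F n d') b) :
    a < b := by
  classical
  have hq2 : 2 ≤ Fintype.card F := Fintype.one_lt_card
  -- upper bound for a
  obtain ⟨P, hPpart, hPdims, hPex, hPcard⟩ :=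
    exists_good_partition F d (by omega) n (by omega) (Fin n → F)
      inferInstance inferInstance inferInstance (finrank_fin_fun F)
  have hamem : P.card ∈ partitionSizes F n d := ⟨P, hPpart, hPdims, hPex, rfl⟩
  have ha1 : a ≤ P.card := ha.2 hamem
  have haup : a ≤ 2 * Fintype.card F ^ (n - d) := by
    have hmx : max (n - d) d = n - d := by omega
    rw [hmx] at hPcard
    omega
  -- lower bound for b
  obtain ⟨P', hP'part, hP'dims, hP'ex, hP'card⟩ := hb.1
  have hVcard : Fintype.card (Fin n → F) = Fintype.card F ^ n := by
    rw [card_eq_pow_finrank (K := F) (V := Fin n → F), finrank_fin_fun]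
  have hcount : Fintype.card F ^ n - 1 ≤ b * (Fintype.card F ^ d' - 1) := by
    set T : Finset (Fin n → F) := Finset.univ.erase 0 with hT
    have hTcard : T.card = Fintype.card F ^ n - 1 := by
      rw [hT, Finset.card_erase_of_mem (Finset.mem_univ _), Finset.card_univ, hVcard]
    have hsub : T ⊆ P'.biUnion (fun W => (Finset.univ.filter (· ∈ W)).erase 0) := by
      intro v hv
      have hv0 : v ≠ 0 := (Finset.mem_erase.mp hv).1
      obtain ⟨W, ⟨hWP, hWv⟩, -⟩ := hP'part.2 v hv0
      exact Finset.mem_biUnion.mpr ⟨W, hWP, Finset.mem_erase.mpr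
        ⟨hv0, Finset.mem_filter.mpr ⟨Finset.mem_univ _, hWv⟩⟩⟩
    have hperW : ∀ W ∈ P',
        ((Finset.univ.filter (· ∈ W)).erase 0).card ≤ Fintype.card F ^ d' - 1 := by
      intro W hWP
      have hWcard : (Finset.univ.filter (· ∈ W)).card = Fintype.card ↥W :=
        (Fintype.card_subtype _).symm
      have hWle : Fintype.card ↥W ≤ Fintype.card F ^ d' := by
        rw [card_eq_pow_finrank (K := F) (V := ↥W)]
        exact Nat.pow_le_pow_right (by omega) (hP'dims W hWP)
      have h0 : (0 : Fin n → F) ∈ Finset.univ.filter (· ∈ W) :=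
        Finset.mem_filter.mpr ⟨Finset.mem_univ _, W.zero_mem⟩
      rw [Finset.card_erase_of_mem h0]
      omega
    calc Fintype.card F ^ n - 1 = T.card := hTcard.symm
      _ ≤ (P'.biUnion (fun W => (Finset.univ.filter (· ∈ W)).erase 0)).card :=
          Finset.card_le_card hsub
      _ ≤ ∑ W ∈ P', ((Finset.univ.filter (· ∈ W)).erase 0).card := Finset.card_biUnion_le
      _ ≤ ∑ _W ∈ P', (Fintype.card F ^ d' - 1) := Finset.sum_le_sum hperW
      _ = b * (Fintype.card F ^ d' - 1) := by
          rw [Finset.sum_const, hP'card, smul_eq_mul]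
  -- arithmetic
  set x := Fintype.card F ^ (n - d) with hxdef
  set y := Fintype.card F ^ (d - 1) with hydef
  set z := Fintype.card F with hzdef
  have hxn : x * y * z = Fintype.card F ^ n := by
    rw [hxdef, hydef, hzdef, ← pow_add, ← pow_succ]
    congr 1
    omega
  have hy' : Fintype.card F ^ d' ≤ y := Nat.pow_le_pow_right (by omega) (by omega)
  have hcount' : x * y * z - 1 ≤ b * (y - 1) := by
    rw [hxn]
    calc Fintype.card F ^ n - 1 ≤ b * (Fintype.card F ^ d' - 1) := hcount
      _ ≤ b * (y - 1) := Nat.mul_le_mul_left _ (by omega)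
  have hx2 : 2 ≤ x := le_trans hq2 (Nat.le_self_pow (by omega) _)
  have hy2 : 2 ≤ y := le_trans hq2 (Nat.le_self_pow (by omega) _)
  have hbz : z * x < b := by
    by_contra h
    push_neg at h
    have h1 : b * (y - 1) ≤ z * x * (y - 1) := Nat.mul_le_mul_right _ h
    have e1 : z * x * (y - 1) + z * x = z * x * y := by
      have hy1 : (y - 1) + 1 = y := by omega
      calc z * x * (y - 1) + z * x = z * x * ((y - 1) + 1) := by ring
        _ = z * x * y := by rw [hy1]
    have e2 : x * y * z = z * x * y := by ring
    have h4 : 4 ≤ z * x := Nat.mul_le_mul hq2 hx2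
    omega
  have hfin : 2 * x ≤ z * x := Nat.mul_le_mul_right _ hq2
  omega
end
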